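/- arXiv:1008.4971 — 9 statements merged into one kernel-verified Lean document; each statement's English description precedes it below -/
import Mathlib

section
/- Let C', C'' ⊆ ℝⁿ be convex polytopes, C = C' + C'', and let D = C_a be a face of C (the minimizer set of ⟨·, a⟩). Then Φ(D) := {x ∈ C' : ∃ y ∈ C'', x + y ∈ D} equals C'_a, and Ψ(D) := {y ∈ C'' : ∃ x ∈ C', x + y ∈ D} equals C''_a. -/
open Pointwise

theorem stmt2 (n : ℕ) (s' s'' : Finset (Fin n → ℝ)) (h' : s'.Nonempty) (h'' : s''.Nonempty)
    (a : Fin n → ℝ) (C' C'' C D : Set (Fin n → ℝ))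
    (hC' : C' = convexHull ℝ ↑s') (hC'' : C'' = convexHull ℝ ↑s'') (hC : C = C' + C'')
    (hD : D = {x ∈ C | (∑ t, x t * a t) = sInf ((fun x => ∑ t, x t * a t) '' C)}) :
    {x ∈ C' | ∃ y ∈ C'', x + y ∈ D}
      = {x ∈ C' | (∑ t, x t * a t) = sInf ((fun x => ∑ t, x t * a t) '' C')} ∧
    {y ∈ C'' | ∃ x ∈ C', x + y ∈ D}
      = {y ∈ C'' | (∑ t, y t * a t) = sInf ((fun x => ∑ t, x t * a t) '' C'')} := by
  set f : (Fin n → ℝ) → ℝ := fun x => ∑ t, x t * a t with hf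
  have hadd : ∀ x y, f (x + y) = f x + f y := by
    intro x y
    simp [hf, add_mul, Finset.sum_add_distrib]
  have hcont : Continuous f := by
    apply continuous_finset_sum
    intro t _
    exact (continuous_apply t).mul continuous_const
  have hcomp' : IsCompact C' := hC' ▸ s'.finite_toSet.isCompact_convexHull ℝ
  have hcomp'' : IsCompact C'' := hC'' ▸ s''.finite_toSet.isCompact_convexHull ℝ
  obtain ⟨p, hp⟩ := h'
  obtain ⟨q, hq⟩ := h''
  have hne' : C'.Nonempty := ⟨p, hC' ▸ subset_convexHull ℝ _ hp⟩
  have hne'' : C''.Nonempty := ⟨q, hC'' ▸ subset_convexHull ℝ _ hq⟩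
  obtain ⟨x₀, hx₀, hminx⟩ := hcomp'.exists_isMinOn hne' hcont.continuousOn
  obtain ⟨y₀, hy₀, hminy⟩ := hcomp''.exists_isMinOn hne'' hcont.continuousOn
  have hm' : sInf (f '' C') = f x₀ := by
    apply IsLeast.csInf_eq
    exact ⟨⟨x₀, hx₀, rfl⟩, by rintro _ ⟨x, hx, rfl⟩; exact hminx hx⟩
  have hm'' : sInf (f '' C'') = f y₀ := by
    apply IsLeast.csInf_eq
    exact ⟨⟨y₀, hy₀, rfl⟩, by rintro _ ⟨y, hy, rfl⟩; exact hminy hy⟩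
  have hm : sInf (f '' C) = f x₀ + f y₀ := by
    apply IsLeast.csInf_eq
    constructor
    · exact ⟨x₀ + y₀, hC ▸ Set.add_mem_add hx₀ hy₀, hadd x₀ y₀⟩
    · rintro _ ⟨z, hz, rfl⟩
      rw [hC] at hz
      obtain ⟨x, hx, y, hy, rfl⟩ := hz
      rw [hadd]
      exact add_le_add (hminx hx) (hminy hy)
  have hDmem : ∀ z, z ∈ D ↔ z ∈ C ∧ f z = f x₀ + f y₀ := by
    intro z
    rw [hD]
    simp only [Set.mem_setOf_eq, ← hf, hm]
    exact Iff.rfl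
  constructor
  · ext x
    simp only [Set.mem_setOf_eq, ← hf, hm']
    constructor
    · rintro ⟨hx, y, hy, hxy⟩
      refine ⟨hx, ?_⟩
      rw [hDmem] at hxy
      have h1 := hxy.2
      rw [hadd] at h1
      have h2 : f x₀ ≤ f x := hminx hx
      have h3 : f y₀ ≤ f y := hminy hy
      linarith
    · rintro ⟨hx, hfx⟩
      refine ⟨hx, y₀, hy₀, ?_⟩
      rw [hDmem]
      exact ⟨hC ▸ Set.add_mem_add hx hy₀, by rw [hadd, show f x = f x₀ from hfx]⟩
  · ext y
    simp only [Set.mem_setOf_eq, ← hf, hm'']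
    constructor
    · rintro ⟨hy, x, hx, hxy⟩
      refine ⟨hy, ?_⟩
      rw [hDmem] at hxy
      have h1 := hxy.2
      rw [hadd] at h1
      have h2 : f x₀ ≤ f x := hminx hx
      have h3 : f y₀ ≤ f y := hminy hy
      linarith
    · rintro ⟨hy, hfy⟩
      refine ⟨hy, x₀, hx₀, ?_⟩
      rw [hDmem]
      exact ⟨hC ▸ Set.add_mem_add hx₀ hy, by rw [hadd, show f y = f y₀ from hfy]⟩
end

section
/- Let C', C'' be convex polytopes with C = C' + C'', and let D be a face of C. Then D = Φ(D) + Ψ(D), where Φ(D) = {x ∈ C' : ∃ y ∈ C'', x + y ∈ D} and Ψ(D) = {y ∈ C'' : ∃ x ∈ C', x + y ∈ D}; moreover this is the unique way to write D as X + Y with X, Y convex, X ⊆ C', Y ⊆ C''. -/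
open Pointwise Set

variable {n : ℕ}



noncomputable def lf (a : Fin n → ℝ) : (Fin n → ℝ) →ₗ[ℝ] ℝ where
  toFun x := ∑ t, x t * a t
  map_add' x y := by simp [add_mul, Finset.sum_add_distrib]
  map_smul' c x := by simp [Finset.mul_sum, mul_assoc]

lemma lf_apply (a x : Fin n → ℝ) : lf a x = ∑ t, x t * a t := rfl

-- min of lf over convexHull of finset
lemma lf_ge_on_hull {s : Finset (Fin n → ℝ)} {a : Fin n → ℝ} {c : ℝ}
    (h : ∀ v ∈ s, c ≤ lf a v) {x : Fin n → ℝ} (hx : x ∈ convexHull ℝ (s : Set (Fin n → ℝ))) :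
    c ≤ lf a x := by
  have : convexHull ℝ (s : Set (Fin n → ℝ)) ⊆ {x | c ≤ lf a x} :=
    convexHull_min h (convex_halfSpace_ge (lf a).isLinear c)
  exact this hx

lemma face_eq {s : Finset (Fin n → ℝ)} (hs : s.Nonempty) (a : Fin n → ℝ) :
    {x ∈ convexHull ℝ (s : Set (Fin n → ℝ)) | lf a x = s.inf' hs (lf a)}
      = convexHull ℝ ((s.filter fun v => lf a v = s.inf' hs (lf a)) : Set (Fin n → ℝ)) := by
  set m := s.inf' hs (lf a) with hm
  apply Set.Subset.antisymm
  · rintro x ⟨hx, hfx⟩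
    rw [Finset.mem_convexHull'] at hx
    obtain ⟨w, hw0, hw1, hwx⟩ := hx
    have hkey : ∀ v ∈ s, ¬ (lf a v = m) → w v = 0 := by
      intro v hv hvf
      by_contra hne
      have hwv : 0 < w v := lt_of_le_of_ne (hw0 v hv) (Ne.symm hne)
      have hvm : m < lf a v := lt_of_le_of_ne (s.inf'_le (f := lf a) hv) (Ne.symm hvf)
      have hfx2 : lf a x = ∑ v ∈ s, w v * lf a v := by
        rw [← hwx]; simp [map_sum, map_smul, smul_eq_mul]
      have hsum : ∑ v ∈ s, w v * (lf a v - m) = 0 := by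
        have h2 : ∑ v ∈ s, w v * (lf a v - m)
            = (∑ v ∈ s, w v * lf a v) - m := by
          simp only [mul_sub, Finset.sum_sub_distrib, ← Finset.sum_mul, hw1, one_mul]
        rw [h2, ← hfx2, hfx]; ring
      have hterm : ∀ u ∈ s, 0 ≤ w u * (lf a u - m) := fun u hu =>
        mul_nonneg (hw0 u hu) (by linarith [s.inf'_le (f := lf a) hu])
      have := (Finset.sum_eq_zero_iff_of_nonneg hterm).1 hsum v hv
      nlinarith
    rw [Finset.mem_convexHull']
    refine ⟨w, fun y hy => hw0 y (Finset.mem_of_mem_filter y hy), ?_, ?_⟩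
    · rw [Finset.sum_filter_of_ne (fun v hv hne => by
        by_contra hvf
        exact hne (hkey v hv hvf))]
      exact hw1
    · rw [Finset.sum_filter_of_ne (fun v hv hne => by
        by_contra hvf
        exact hne (by simp [hkey v hv hvf]))]
      exact hwx
  · rintro x hx
    have hsub : ((s.filter fun v => lf a v = m) : Set (Fin n → ℝ))
        ⊆ {x ∈ convexHull ℝ (s : Set (Fin n → ℝ)) | lf a x = m} := by
      rintro v hv
      simp only [Finset.coe_filter, Set.mem_setOf_eq] at hv
      exact ⟨subset_convexHull ℝ _ hv.1, hv.2⟩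
    have hconv : Convex ℝ {x ∈ convexHull ℝ (s : Set (Fin n → ℝ)) | lf a x = m} := by
      have h1 : Convex ℝ (convexHull ℝ (s : Set (Fin n → ℝ))) := convex_convexHull ℝ _
      have h2 : Convex ℝ {x | lf a x = m} := convex_hyperplane (lf a).isLinear m
      have : {x ∈ convexHull ℝ (s : Set (Fin n → ℝ)) | lf a x = m}
          = convexHull ℝ (s : Set (Fin n → ℝ)) ∩ {x | lf a x = m} := rfl
      rw [this]; exact h1.inter h2
    exact convexHull_min hsub hconv hx

-- finite subset with same span
lemma exists_finset_span_eq (S : Set (Fin n → ℝ)) :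
    ∃ F : Finset (Fin n → ℝ), ↑F ⊆ S ∧ Submodule.span ℝ (F : Set (Fin n → ℝ)) = Submodule.span ℝ S := by
  obtain ⟨b, hbS, hspan, hli⟩ := exists_linearIndependent ℝ S
  have hfin : b.Finite := hli.setFinite
  exact ⟨hfin.toFinset, by simpa [hfin.coe_toFinset] using hbS, by rw [hfin.coe_toFinset, hspan]⟩

-- finite subset with same affine span
lemma exists_finset_affineSpan_eq (S : Set (Fin n → ℝ)) (hS : S.Nonempty) :
    ∃ F : Finset (Fin n → ℝ), F.Nonempty ∧ ↑F ⊆ S ∧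
      affineSpan ℝ (F : Set (Fin n → ℝ)) = affineSpan ℝ S := by
  obtain ⟨p, hp⟩ := hS
  obtain ⟨F0, hF0S, hF0span⟩ := exists_finset_span_eq ((· - p) '' S)
  classical
  refine ⟨insert p (F0.image (· + p)), ⟨p, Finset.mem_insert_self _ _⟩, ?_, ?_⟩
  · intro x hx
    simp only [Finset.coe_insert, Set.mem_insert_iff, Finset.coe_image, Set.mem_image,
      Finset.mem_coe] at hx
    rcases hx with rfl | ⟨y, hy, rfl⟩
    · exact hp
    · obtain ⟨z, hz, hzy⟩ := hF0S hy
      have : y + p = z := by rw [← hzy]; exact sub_add_cancel z p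
      rwa [this]
  · apply le_antisymm
    · apply affineSpan_mono
      intro x hx
      simp only [Finset.coe_insert, Set.mem_insert_iff, Finset.coe_image, Set.mem_image,
        Finset.mem_coe] at hx
      rcases hx with rfl | ⟨y, hy, rfl⟩
      · exact hp
      · obtain ⟨z, hz, hzy⟩ := hF0S hy
        have : y + p = z := by rw [← hzy]; exact sub_add_cancel z p
        rwa [this]
    · rw [affineSpan_le]
      intro x hxS
      have hx1 : x - p ∈ Submodule.span ℝ ((· - p) '' S) := Submodule.subset_span ⟨x, hxS, rfl⟩
      rw [← hF0span] at hx1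
      set A := affineSpan ℝ ((insert p (F0.image (· + p)) : Finset (Fin n → ℝ)) : Set (Fin n → ℝ)) with hA
      have hpA : p ∈ A := mem_affineSpan ℝ (by simp)
      have hdir : Submodule.span ℝ (F0 : Set (Fin n → ℝ)) ≤ A.direction := by
        rw [Submodule.span_le]
        intro v hv
        have hvpA : v + p ∈ A := mem_affineSpan ℝ (by
          simp only [Finset.coe_insert, Set.mem_insert_iff, Finset.coe_image, Set.mem_image,
            Finset.mem_coe]
          exact Or.inr ⟨v, hv, rfl⟩)
        have := AffineSubspace.vsub_mem_direction hvpA hpA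
        simpa [vsub_eq_sub] using this
      have : x - p ∈ A.direction := hdir hx1
      have := AffineSubspace.vadd_mem_of_mem_direction this hpA
      simpa [vadd_eq_add, sub_add_cancel] using this



-- K3a: coordinate bound for a finite linearly independent set
lemma coord_bound (B : Finset (Fin n → ℝ))
    (hli : LinearIndependent ℝ (fun x : {x // x ∈ B} => (x : Fin n → ℝ))) :
    ∃ C : ℝ, 0 < C ∧ ∀ w ∈ Submodule.span ℝ (B : Set (Fin n → ℝ)),
      ∃ θ : {x // x ∈ B} → ℝ, w = ∑ x ∈ B.attach, θ x • (x : Fin n → ℝ) ∧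
        ∀ x, |θ x| ≤ C * ‖w‖ := by
  classical
  set L : ({x // x ∈ B} → ℝ) →ₗ[ℝ] (Fin n → ℝ) :=
    Fintype.linearCombination ℝ (fun x : {x // x ∈ B} => (x : Fin n → ℝ)) with hL
  have hrange : LinearMap.range L = Submodule.span ℝ (B : Set (Fin n → ℝ)) := by
    rw [hL, Fintype.range_linearCombination]
    congr 1
    ext v; simp [Subtype.range_coe]
  have hinj : Function.Injective L := by
    rw [← LinearMap.ker_eq_bot]
    ext θ
    simp only [LinearMap.mem_ker, Submodule.mem_bot]
    constructor
    · intro hθ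
      have := Fintype.linearIndependent_iff.1 hli θ (by
        simpa [hL, Fintype.linearCombination_apply] using hθ)
      funext i; exact this i
    · rintro rfl; simp
  set e : ({x // x ∈ B} → ℝ) ≃ₗ[ℝ] LinearMap.range L := LinearEquiv.ofInjective L hinj with he
  have hcont : Continuous (e.symm : LinearMap.range L →ₗ[ℝ] ({x // x ∈ B} → ℝ)) :=
    LinearMap.continuous_of_finiteDimensional _
  set g : LinearMap.range L →L[ℝ] ({x // x ∈ B} → ℝ) :=
    ⟨(e.symm : LinearMap.range L →ₗ[ℝ] ({x // x ∈ B} → ℝ)), hcont⟩ with hg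
  refine ⟨‖g‖ + 1, by positivity, ?_⟩
  intro w hw
  rw [← hrange] at hw
  set θ : {x // x ∈ B} → ℝ := e.symm ⟨w, hw⟩ with hθ
  have hLθ : L θ = w := by
    have : e θ = ⟨w, hw⟩ := by rw [hθ]; exact e.apply_symm_apply _
    have h2 := congrArg (Subtype.val) this
    simpa [he, LinearEquiv.ofInjective_apply] using h2
  refine ⟨θ, ?_, ?_⟩
  · rw [← hLθ, hL, Fintype.linearCombination_apply, Finset.univ_eq_attach]
  · intro x
    have h1 : |θ x| ≤ ‖θ‖ := by
      simpa using norm_le_pi_norm θ x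
    have h2 : ‖θ‖ ≤ ‖g‖ * ‖(⟨w, hw⟩ : LinearMap.range L)‖ := by
      rw [hθ]; exact g.le_opNorm _
    have h3 : ‖(⟨w, hw⟩ : LinearMap.range L)‖ = ‖w‖ := rfl
    nlinarith [norm_nonneg w, norm_nonneg g]

lemma deep_point (F : Finset (Fin n → ℝ)) (hF : F.Nonempty) :
    ∃ ρ : ℝ, 0 < ρ ∧ ∀ p ∈ affineSpan ℝ (F : Set (Fin n → ℝ)),
      ‖p - (F.card : ℝ)⁻¹ • ∑ u ∈ F, u‖ ≤ ρ → p ∈ convexHull ℝ (F : Set (Fin n → ℝ)) := by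
  classical
  set c : Fin n → ℝ := (F.card : ℝ)⁻¹ • ∑ u ∈ F, u with hc
  have hk : (0 : ℝ) < F.card := by exact_mod_cast Finset.card_pos.2 hF
  have hcmem : c ∈ convexHull ℝ (F : Set (Fin n → ℝ)) := by
    rw [Finset.mem_convexHull']
    refine ⟨fun _ => (F.card : ℝ)⁻¹, fun _ _ => by positivity, ?_, ?_⟩
    · rw [Finset.sum_const, nsmul_eq_mul]; field_simp
    · rw [hc, Finset.smul_sum]
  set I : Set (Fin n → ℝ) := (· - c) '' ↑F with hI
  obtain ⟨b, hbI, hbspan, hbli⟩ := exists_linearIndependent ℝ I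
  have hbfin : b.Finite := hbli.setFinite
  set B : Finset (Fin n → ℝ) := hbfin.toFinset with hB
  have hBb : (B : Set (Fin n → ℝ)) = b := hbfin.coe_toFinset
  have hmemb : ∀ x : {x // x ∈ B}, (x : Fin n → ℝ) ∈ b := by
    intro x
    rw [← hBb]
    exact_mod_cast x.2
  have hliB : LinearIndependent ℝ (fun x : {x // x ∈ B} => (x : Fin n → ℝ)) := by
    refine hbli.comp (fun x : {x // x ∈ B} => (⟨(x : Fin n → ℝ), hmemb x⟩ : b)) ?_
    intro x y hxy
    apply Subtype.ext
    have := congrArg Subtype.val hxy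
    simpa using this
  obtain ⟨C, hC, hcoord⟩ := coord_bound B hliB
  have hgex : ∀ x : {x // x ∈ B}, ∃ u, u ∈ F ∧ u - c = (x : Fin n → ℝ) := by
    intro x
    obtain ⟨u, hu, hux⟩ := hbI (hmemb x)
    exact ⟨u, hu, hux⟩
  choose g hgF hgc using hgex
  set T : ℝ := (B.card : ℝ) * C + 1 with hT
  have hT0 : 0 < T := by positivity
  refine ⟨1 / (T * (F.card + 1)), by positivity, ?_⟩
  intro p hp hpd
  set w : Fin n → ℝ := p - c with hw
  have hwspan : w ∈ Submodule.span ℝ (B : Set (Fin n → ℝ)) := by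
    rw [hBb, hbspan]
    have hcA : c ∈ affineSpan ℝ (F : Set (Fin n → ℝ)) := convexHull_subset_affineSpan _ hcmem
    have hdir := AffineSubspace.vsub_mem_direction hp hcA
    rw [direction_affineSpan] at hdir
    have hvs : vectorSpan ℝ (F : Set (Fin n → ℝ)) ≤ Submodule.span ℝ I := by
      rw [vectorSpan_def, Submodule.span_le]
      rintro v ⟨x, hx, y, hy, rfl⟩
      have hx' : x - c ∈ I := ⟨x, hx, rfl⟩
      have hy' : y - c ∈ I := ⟨y, hy, rfl⟩
      simp only [SetLike.mem_coe, vsub_eq_sub]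
      have hxy : x - y = (x - c) - (y - c) := by module
      rw [hxy]
      exact sub_mem (Submodule.subset_span hx') (Submodule.subset_span hy')
    exact hvs hdir
  obtain ⟨θ, hθw, hθb⟩ := hcoord w hwspan
  set S : ℝ := ∑ x ∈ B.attach, θ x with hS
  have hwρ : ‖w‖ ≤ 1 / (T * (F.card + 1)) := hpd
  have hθsmall : ∀ x, |θ x| ≤ C / (T * (F.card + 1)) := by
    intro x
    calc |θ x| ≤ C * ‖w‖ := hθb x
    _ ≤ C * (1 / (T * (F.card + 1))) := by
        apply mul_le_mul_of_nonneg_left hwρ (le_of_lt hC)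
    _ = C / (T * (F.card + 1)) := by ring
  have habs : ∀ (G : Finset {x // x ∈ B}), |∑ x ∈ G, θ x| ≤ 1 / (F.card + 1) := by
    intro G
    have hGB : (G.card : ℝ) ≤ B.card := by
      exact_mod_cast (Finset.card_le_univ G).trans_eq (Fintype.card_coe B)
    have hGC : (G.card : ℝ) * C ≤ T := by
      rw [hT]
      nlinarith
    have hstep : (G.card : ℝ) * (C / (T * (F.card + 1))) ≤ 1 / (F.card + 1) := by
      calc (G.card : ℝ) * (C / (T * (F.card + 1)))
          = (G.card * C) / (T * (F.card + 1)) := by ring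
      _ ≤ T / (T * (F.card + 1)) := by gcongr
      _ = 1 / (F.card + 1) := by field_simp
    calc |∑ x ∈ G, θ x| ≤ ∑ x ∈ G, |θ x| := Finset.abs_sum_le_sum_abs _ _
    _ ≤ ∑ _x ∈ G, C / (T * (F.card + 1)) := Finset.sum_le_sum fun x _ => hθsmall x
    _ = G.card * (C / (T * (F.card + 1))) := by rw [Finset.sum_const, nsmul_eq_mul]
    _ ≤ 1 / (F.card + 1) := hstep
  set μ : (Fin n → ℝ) → ℝ :=
    fun u => (1 - S) / F.card + ∑ x ∈ B.attach.filter (fun x => g x = u), θ x with hμ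
  have hfibR : ∑ u ∈ F, ∑ x ∈ B.attach.filter (fun x => g x = u), θ x = S :=
    Finset.sum_fiberwise_of_maps_to (fun x _ => hgF x) θ
  have hfibV : ∑ u ∈ F, ∑ x ∈ B.attach.filter (fun x => g x = u), θ x • g x
      = ∑ x ∈ B.attach, θ x • g x :=
    Finset.sum_fiberwise_of_maps_to (fun x _ => hgF x) (fun x => θ x • g x)
  have hinv : (1 / ((F.card : ℝ) + 1)) * ((F.card : ℝ) + 1) = 1 := by
    field_simp
  rw [Finset.mem_convexHull']
  refine ⟨μ, ?_, ?_, ?_⟩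
  · intro u _
    simp only [hμ]
    have h1 := abs_le.1 (habs (B.attach.filter (fun x => g x = u)))
    have h2 := abs_le.1 (habs B.attach)
    have e3 : 1 / ((F.card : ℝ) + 1) ≤ (1 - S) / (F.card : ℝ) := by
      rw [le_div_iff₀ hk]
      nlinarith [h2.1, h2.2, hinv, hk]
    linarith [h1.1, h1.2, e3]
  · simp only [hμ]
    rw [Finset.sum_add_distrib, hfibR, Finset.sum_const, nsmul_eq_mul]
    field_simp
    ring
  · have hsplit : ∑ u ∈ F, μ u • u
        = ∑ u ∈ F, (((1 - S) / F.card) • u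
          + ∑ x ∈ B.attach.filter (fun x => g x = u), θ x • u) :=
      Finset.sum_congr rfl (fun u _ => by
        simp only [hμ]; rw [add_smul, Finset.sum_smul])
    rw [hsplit, Finset.sum_add_distrib]
    have h1 : ∑ u ∈ F, ((1 - S) / F.card) • u = (1 - S) • c := by
      rw [hc, smul_smul, ← Finset.smul_sum, div_eq_mul_inv]
    have h2 : ∑ u ∈ F, ∑ x ∈ B.attach.filter (fun x => g x = u), θ x • u
        = ∑ x ∈ B.attach, θ x • g x := by
      rw [← hfibV]
      refine Finset.sum_congr rfl (fun u _ => ?_)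
      refine Finset.sum_congr rfl (fun x hx => ?_)
      rw [(Finset.mem_filter.1 hx).2]
    have h3 : ∑ x ∈ B.attach, θ x • g x = w + S • c := by
      have hterm : ∀ x ∈ B.attach, θ x • g x = θ x • (x : Fin n → ℝ) + θ x • c := by
        intro x _
        rw [← smul_add, ← hgc x]
        congr 1
        abel
      rw [Finset.sum_congr rfl hterm, Finset.sum_add_distrib, ← hθw, ← Finset.sum_smul, ← hS]
    rw [h1, h2, h3, hw]
    module



lemma mem_closure_summand {X Y P Q : Set (Fin n → ℝ)} (hXconv : Convex ℝ X)
    (hXY : X + Y = P + Q) (hYQ : Y ⊆ Q) (hYne : Y.Nonempty)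
    {R : ℝ} (hQbd : ∀ q ∈ Q, ‖q‖ ≤ R) {z : Fin n → ℝ} (hz : z ∈ P) :
    z ∈ closure X := by
  classical
  obtain ⟨y0, hy0⟩ := hYne
  have step : ∀ y : {y // y ∈ Y}, ∃ p : (Fin n → ℝ) × (Fin n → ℝ),
      p.1 ∈ X ∧ p.2 ∈ Y ∧ p.1 + p.2 = z + (y : Fin n → ℝ) := by
    rintro ⟨y, hy⟩
    have hmem : z + y ∈ X + Y := by
      rw [hXY]
      exact Set.add_mem_add hz (hYQ hy)
    obtain ⟨x', hx', y', hy', hxy⟩ := hmem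
    exact ⟨(x', y'), hx', hy', hxy⟩
  choose f hf1 hf2 hf3 using step
  let Ys : ℕ → {y // y ∈ Y} := fun k => Nat.rec ⟨y0, hy0⟩ (fun _ prev => ⟨(f prev).2, hf2 prev⟩) k
  let xs : ℕ → (Fin n → ℝ) := fun k => (f (Ys k)).1
  have hxsX : ∀ k, xs k ∈ X := fun k => hf1 (Ys k)
  have hrel : ∀ k, xs k + (Ys (k+1)).val = z + (Ys k).val := by
    intro k
    have := hf3 (Ys k)
    exact this
  have htel : ∀ N, (∑ k ∈ Finset.range N, xs k) + (Ys N).val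
      = (N : ℕ) • z + y0 := by
    intro N
    induction N with
    | zero => simp [Ys]
    | succ N ih =>
      rw [Finset.sum_range_succ, succ_nsmul, add_assoc, hrel N, add_comm z ((Ys N).val),
        ← add_assoc, ih, add_assoc, add_comm y0 z, ← add_assoc]
  rw [Metric.mem_closure_iff]
  intro ε hε
  have hR0 : 0 ≤ R := le_trans (norm_nonneg y0) (hQbd y0 (hYQ hy0))
  obtain ⟨N, hN⟩ := exists_nat_gt (2 * R / ε)
  have hN0 : 0 < N := by
    by_contra h
    push_neg at h
    interval_cases N
    simp only [Nat.cast_zero] at hN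
    have : 0 ≤ 2 * R / ε := by positivity
    linarith
  set A : Fin n → ℝ := (N : ℝ)⁻¹ • ∑ k ∈ Finset.range N, xs k with hA
  have hAX : A ∈ X := by
    have := hXconv.sum_mem (t := Finset.range N) (w := fun _ => (N : ℝ)⁻¹)
      (z := xs) (fun _ _ => by positivity)
      (by rw [Finset.sum_const, Finset.card_range, nsmul_eq_mul]; field_simp)
      (fun k _ => hxsX k)
    rw [hA, Finset.smul_sum]
    simpa using this
  refine ⟨A, hAX, ?_⟩
  have hsum : ∑ k ∈ Finset.range N, xs k = (N : ℕ) • z + y0 - (Ys N).val := by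
    rw [← htel N]; abel
  have hAz : A - z = (N : ℝ)⁻¹ • (y0 - (Ys N).val) := by
    have hNz : (N : ℕ) • z = (N : ℝ) • z := (Nat.cast_smul_eq_nsmul ℝ N z).symm
    have hN1 : (N : ℝ) ≠ 0 := by positivity
    rw [hA, hsum, hNz]
    match_scalars <;> field_simp <;> ring
  have hbd : ‖A - z‖ ≤ 2 * R / N := by
    rw [hAz, norm_smul]
    have h1 : ‖y0 - (Ys N).val‖ ≤ 2 * R := by
      calc ‖y0 - (Ys N).val‖
          ≤ ‖y0‖ + ‖(Ys N).val‖ := norm_sub_le _ _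
      _ ≤ R + R := add_le_add (hQbd y0 (hYQ hy0)) (hQbd _ (hYQ (Ys N).2))
      _ = 2 * R := by ring
    have h2 : ‖((N : ℝ))⁻¹‖ = (N : ℝ)⁻¹ := by
      rw [Real.norm_eq_abs, abs_of_pos (by positivity)]
    rw [h2]
    calc (N : ℝ)⁻¹ * ‖y0 - (Ys N).val‖
        ≤ (N : ℝ)⁻¹ * (2 * R) := by
          apply mul_le_mul_of_nonneg_left h1 (by positivity)
    _ = 2 * R / N := by ring
  have hfin : 2 * R / (N : ℝ) < ε := by
    rw [div_lt_iff₀ (by positivity : (0:ℝ) < N)]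
    rw [div_lt_iff₀ hε] at hN
    linarith
  calc dist z A = ‖A - z‖ := by rw [dist_comm, dist_eq_norm]
  _ ≤ 2 * R / N := hbd
  _ < ε := hfin

lemma mem_of_pos_weights {X : Set (Fin n → ℝ)} (hX : Convex ℝ X) (hXne : X.Nonempty)
    {s : Finset (Fin n → ℝ)} (hsub : X ⊆ convexHull ℝ (s : Set (Fin n → ℝ)))
    (hscl : ∀ v ∈ s, v ∈ closure X)
    {z : Fin n → ℝ} (w : (Fin n → ℝ) → ℝ) (hwpos : ∀ v ∈ s, 0 < w v)
    (hw1 : ∑ v ∈ s, w v = 1) (hwz : ∑ v ∈ s, w v • v = z) : z ∈ X := by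
  classical
  have hsne : s.Nonempty := by
    by_contra h
    rw [Finset.not_nonempty_iff_eq_empty] at h
    rw [h] at hw1; simp at hw1
  obtain ⟨F, hFne, hFX, hFspan⟩ := exists_finset_affineSpan_eq X hXne
  obtain ⟨ρ, hρ, hdeep⟩ := deep_point F hFne
  set c : Fin n → ℝ := (F.card : ℝ)⁻¹ • ∑ u ∈ F, u with hc
  have hcF : c ∈ convexHull ℝ (F : Set (Fin n → ℝ)) := by
    rw [Finset.mem_convexHull']
    have hk : (0 : ℝ) < F.card := by exact_mod_cast Finset.card_pos.2 hFne
    refine ⟨fun _ => (F.card : ℝ)⁻¹, fun _ _ => by positivity, ?_, ?_⟩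
    · rw [Finset.sum_const, nsmul_eq_mul]; field_simp
    · rw [hc, Finset.smul_sum]
  have hcX : c ∈ X := (convexHull_min hFX hX) hcF
  -- weights of c in conv s
  obtain ⟨α, hα0, hα1, hαc⟩ := Finset.mem_convexHull'.1 (hsub hcX)
  set t : ℝ := s.inf' hsne w with ht
  have ht0 : 0 < t := by
    rw [ht, Finset.lt_inf'_iff]
    exact fun v hv => hwpos v hv
  have ht1 : t ≤ 1 := by
    obtain ⟨v, hv⟩ := hsne
    have h1 : w v ≤ 1 := by
      rw [← hw1]
      exact Finset.single_le_sum (fun u hu => (hwpos u hu).le) hv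
    exact le_trans (Finset.inf'_le _ hv) h1
  clear_value c
  have h1t : (0:ℝ) < 1 + t := by linarith
  have h1tne : (1:ℝ) + t ≠ 0 := ne_of_gt h1t
  set u : Fin n → ℝ := z + t • (z - c) with hu
  have huconv : u ∈ convexHull ℝ (s : Set (Fin n → ℝ)) := by
    rw [Finset.mem_convexHull']
    refine ⟨fun v => (1 + t) * w v - t * α v, ?_, ?_, ?_⟩
    · intro v hv
      show 0 ≤ (1 + t) * w v - t * α v
      have hwv : t ≤ w v := Finset.inf'_le _ hv
      have hαv : α v ≤ 1 := by
        calc α v ≤ ∑ u ∈ s, α u := Finset.single_le_sum (fun u hu => hα0 u hu) hv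
        _ = 1 := hα1
      nlinarith [hα0 v hv, ht0]
    · rw [Finset.sum_sub_distrib, ← Finset.mul_sum, ← Finset.mul_sum, hw1, hα1]; ring
    · have : ∀ v ∈ s, ((1 + t) * w v - t * α v) • v = (1 + t) • (w v • v) - t • (α v • v) := by
        intro v _
        rw [sub_smul, smul_smul, smul_smul]
      rw [Finset.sum_congr rfl this, Finset.sum_sub_distrib, ← Finset.smul_sum, ← Finset.smul_sum,
        hwz, hαc, hu]
      match_scalars <;> ring
  have hclconv : convexHull ℝ (s : Set (Fin n → ℝ)) ⊆ closure X :=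
    convexHull_min (fun v hv => hscl v hv) hX.closure
  have hucl : u ∈ closure X := hclconv huconv
  set σ : ℝ := 1 / (1 + t) with hσ
  have hσ0 : 0 < σ := by rw [hσ]; positivity
  have hσ1 : σ < 1 := by
    rw [hσ]
    rw [div_lt_one (by linarith)]
    linarith
  have h1σ : 0 < 1 - σ := by linarith
  have h1σne : 1 - σ ≠ 0 := ne_of_gt h1σ
  have hσne : σ ≠ 0 := ne_of_gt hσ0
  have htne : t ≠ 0 := ne_of_gt ht0
  have hσt : σ * (1 + t) = 1 := by rw [hσ]; field_simp
  -- get u' ∈ X close to u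
  have hε : 0 < ρ * (1 - σ) / σ := by positivity
  obtain ⟨u', hu'X, hdu⟩ := Metric.mem_closure_iff.1 hucl _ hε
  set c' : Fin n → ℝ := (1 - σ)⁻¹ • (z - σ • u') with hc'
  -- z as convex combination of u' and c'
  have hzcomb : z = σ • u' + (1 - σ) • c' := by
    rw [hc', smul_smul]
    have : (1 - σ) * (1 - σ)⁻¹ = 1 := by field_simp
    rw [this, one_smul]
    abel
  -- c' in affine span
  have hAclosed : IsClosed (affineSpan ℝ X : Set (Fin n → ℝ)) :=
    AffineSubspace.closed_of_finiteDimensional _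
  have hzA : z ∈ affineSpan ℝ X := by
    have h1 : z ∈ closure X := hclconv (by
      rw [Finset.mem_convexHull']; exact ⟨w, fun v hv => (hwpos v hv).le, hw1, hwz⟩)
    have h2 : closure X ⊆ closure (affineSpan ℝ X : Set (Fin n → ℝ)) :=
      closure_mono (subset_affineSpan ℝ X)
    rw [hAclosed.closure_eq] at h2
    exact h2 h1
  have hu'A : u' ∈ affineSpan ℝ X := subset_affineSpan ℝ X hu'X
  have hc'A : c' ∈ affineSpan ℝ X := by
    have hkey : c' = (σ / (1 - σ)) • (z -ᵥ u') +ᵥ z := by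
      rw [hc', vsub_eq_sub, vadd_eq_add]
      match_scalars <;> field_simp <;>
        nlinarith [hσt, mul_inv_cancel₀ h1tne, ht0]
    rw [hkey]
    exact AffineSubspace.smul_vsub_vadd_mem _ _ hzA hu'A hzA
  -- c' close to c
  have hcc' : ‖c' - c‖ ≤ ρ := by
    have hcval : c = (1 - σ)⁻¹ • (z - σ • u) := by
      rw [hu]
      match_scalars <;> field_simp <;>
        nlinarith [hσt, mul_inv_cancel₀ h1tne, ht0]
    have hdiff : c' - c = ((1 - σ)⁻¹ * σ) • (u - u') := by
      rw [hc', hcval]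
      match_scalars <;> field_simp <;>
        nlinarith [hσt, mul_inv_cancel₀ h1tne, ht0]
    rw [hdiff, norm_smul]
    have hval : ‖(1 - σ)⁻¹ * σ‖ = σ / (1 - σ) := by
      rw [Real.norm_eq_abs, abs_of_pos (by positivity)]
      ring
    rw [hval]
    have hdu' : ‖u - u'‖ < ρ * (1 - σ) / σ := by
      rw [← dist_eq_norm]
      exact hdu
    calc σ / (1 - σ) * ‖u - u'‖ ≤ σ / (1 - σ) * (ρ * (1 - σ) / σ) := by
          apply mul_le_mul_of_nonneg_left hdu'.le (by positivity)
    _ = ρ := by field_simp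
  -- conclude
  have hc'F : c' ∈ convexHull ℝ (F : Set (Fin n → ℝ)) := by
    apply hdeep c' (by rw [hFspan]; exact hc'A)
    exact hcc'
  have hc'X : c' ∈ X := (convexHull_min hFX hX) hc'F
  rw [hzcomb]
  exact hX hu'X hc'X hσ0.le h1σ.le (by ring)

lemma exists_exposing (s₀ rest : Finset (Fin n → ℝ)) (hrest : rest.Nonempty) (hs₀ : s₀.Nonempty)
    (hdisj : ∀ q ∈ convexHull ℝ (rest : Set (Fin n → ℝ)), q ∉ affineSpan ℝ (s₀ : Set (Fin n → ℝ))) :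
    ∃ b : Fin n → ℝ, (∀ u ∈ s₀, ∀ u' ∈ s₀, lf b u = lf b u') ∧
      (∀ v ∈ rest, ∀ u ∈ s₀, lf b u < lf b v) := by
  classical
  have hcompact : IsCompact (convexHull ℝ (rest : Set (Fin n → ℝ))) :=
    rest.finite_toSet.isCompact_convexHull ℝ
  have hconv1 : Convex ℝ (convexHull ℝ (rest : Set (Fin n → ℝ))) := convex_convexHull ℝ _
  have hclosed : IsClosed (affineSpan ℝ (s₀ : Set (Fin n → ℝ)) : Set (Fin n → ℝ)) :=
    AffineSubspace.closed_of_finiteDimensional _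
  have hconv2 : Convex ℝ (affineSpan ℝ (s₀ : Set (Fin n → ℝ)) : Set (Fin n → ℝ)) :=
    AffineSubspace.convex _
  have hdisj' : Disjoint (convexHull ℝ (rest : Set (Fin n → ℝ)))
      (affineSpan ℝ (s₀ : Set (Fin n → ℝ)) : Set (Fin n → ℝ)) := by
    rw [Set.disjoint_left]
    exact fun q hq hq' => hdisj q hq hq'
  obtain ⟨f, β, γ, hfc, hβγ, hfa⟩ :=
    geometric_hahn_banach_compact_closed hconv1 hcompact hconv2 hclosed hdisj'
  -- f is constant on the affine span
  have hconst : ∀ p ∈ affineSpan ℝ (s₀ : Set (Fin n → ℝ)),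
      ∀ q ∈ affineSpan ℝ (s₀ : Set (Fin n → ℝ)), f p = f q := by
    intro p hp q hq
    by_contra hne
    set r : ℝ := (γ - 1 - f q) / (f p - f q) with hr
    have hpq : f p - f q ≠ 0 := fun h => hne (by linarith [sub_eq_zero.1 h])
    have hmem : r • (p -ᵥ q) +ᵥ q ∈ affineSpan ℝ (s₀ : Set (Fin n → ℝ)) :=
      AffineSubspace.smul_vsub_vadd_mem _ r hp hq hq
    have hval : f (r • (p -ᵥ q) +ᵥ q) = r * (f p - f q) + f q := by
      rw [vsub_eq_sub, vadd_eq_add, map_add, map_smul, map_sub, smul_eq_mul]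
    have := hfa _ hmem
    rw [hval, hr] at this
    rw [div_mul_cancel₀ _ hpq] at this
    linarith
  -- convert f to a vector
  set b : Fin n → ℝ := fun i => - f (fun j => if i = j then (1:ℝ) else 0) with hb
  have hlf : ∀ x, lf b x = - f x := by
    intro x
    have hx : (∑ i : Fin n, x i • (fun j => if i = j then (1:ℝ) else 0) : Fin n → ℝ) = x := (pi_eq_sum_univ x).symm
    calc lf b x = ∑ i, x i * (- f (fun j => if i = j then (1:ℝ) else 0)) := rfl
    _ = - ∑ i : Fin n, f (x i • (fun j => if i = j then (1:ℝ) else 0) : Fin n → ℝ) := by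
        rw [← Finset.sum_neg_distrib]
        refine Finset.sum_congr rfl (fun i _ => ?_)
        rw [map_smul, smul_eq_mul]
        ring
    _ = - f (∑ i : Fin n, x i • (fun j => if i = j then (1:ℝ) else 0) : Fin n → ℝ) := by rw [map_sum]
    _ = - f x := by rw [hx]
  refine ⟨b, ?_, ?_⟩
  · intro u hu u' hu'
    rw [hlf, hlf]
    have := hconst u (mem_affineSpan ℝ hu) u' (mem_affineSpan ℝ hu')
    rw [this]
  · intro v hv u hu
    rw [hlf, hlf]
    have h1 : f v < β := hfc v (subset_convexHull ℝ _ hv)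
    have h2 : γ < f u := hfa u (mem_affineSpan ℝ hu)
    linarith

lemma lf_neg (b x : Fin n → ℝ) : lf (-b) x = - lf b x := by
  show ∑ t, x t * (-b) t = - ∑ t, x t * b t
  rw [← Finset.sum_neg_distrib]
  exact Finset.sum_congr rfl (fun i _ => by simp)

lemma lf_eq_on_hull {s : Finset (Fin n → ℝ)} {b : Fin n → ℝ} {m : ℝ}
    (h : ∀ v ∈ s, lf b v = m) {p : Fin n → ℝ}
    (hp : p ∈ convexHull ℝ (s : Set (Fin n → ℝ))) : lf b p = m := by
  have h1 : m ≤ lf b p := lf_ge_on_hull (fun v hv => (h v hv).ge) hp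
  have h2 : -m ≤ lf (-b) p :=
    lf_ge_on_hull (fun v hv => by rw [lf_neg, h v hv]) hp
  rw [lf_neg] at h2
  linarith

lemma key : ∀ N : ℕ, ∀ s t : Finset (Fin n → ℝ), s.card + t.card ≤ N →
    s.Nonempty → t.Nonempty →
    ∀ X Y : Set (Fin n → ℝ), Convex ℝ X → Convex ℝ Y →
    X ⊆ convexHull ℝ (s : Set (Fin n → ℝ)) → Y ⊆ convexHull ℝ (t : Set (Fin n → ℝ)) →
    X + Y = convexHull ℝ (s : Set (Fin n → ℝ)) + convexHull ℝ (t : Set (Fin n → ℝ)) →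
    convexHull ℝ (s : Set (Fin n → ℝ)) ⊆ X := by
  classical
  intro N
  induction N with
  | zero =>
    intro s t hcard hsne _ _ _ _ _ _ _ _
    obtain ⟨v, hv⟩ := hsne
    have : s.card ≠ 0 := Finset.card_ne_zero_of_mem hv
    omega
  | succ N IH =>
    intro s t hcard hsne htne X Y hXc hYc hXs hYt hXY
    by_cases hle : s.card + t.card ≤ N
    · exact IH s t hle hsne htne X Y hXc hYc hXs hYt hXY
    intro z hz
    -- X and Y are nonempty
    obtain ⟨v1, hv1⟩ := id hsne
    obtain ⟨w1, hw1t⟩ := id htne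
    have hv1w1 : v1 + w1 ∈ X + Y := by
      rw [hXY]
      exact Set.add_mem_add (subset_convexHull ℝ _ hv1) (subset_convexHull ℝ _ hw1t)
    obtain ⟨x1, hx1, y1, hy1, _⟩ := hv1w1
    have hXne : X.Nonempty := ⟨x1, hx1⟩
    have hYne : Y.Nonempty := ⟨y1, hy1⟩
    -- bound on conv t
    obtain ⟨R, hR⟩ := isBounded_iff_forall_norm_le.1
      (t.finite_toSet.isCompact_convexHull ℝ).isBounded
    have hclX : ∀ z' ∈ convexHull ℝ (s : Set (Fin n → ℝ)), z' ∈ closure X :=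
      fun z' hz' => mem_closure_summand hXc hXY hYt hYne hR hz'
    -- representations of z and maximal support
    set PP : ((Fin n → ℝ) → ℝ) → Prop := fun w =>
      (∀ v ∈ s, 0 ≤ w v) ∧ (∑ v ∈ s, w v = 1) ∧ (∑ v ∈ s, w v • v = z) with hPP
    obtain ⟨w0, hw00, hw01, hw02⟩ := Finset.mem_convexHull'.1 hz
    set A : Set ℕ := {k | ∃ w, PP w ∧ (s.filter fun v => 0 < w v).card = k} with hA
    have hAne : A.Nonempty := ⟨_, w0, ⟨hw00, hw01, hw02⟩, rfl⟩
    have hAbdd : BddAbove A := by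
      refine ⟨s.card, ?_⟩
      rintro k ⟨w, _, hk⟩
      rw [← hk]
      exact Finset.card_filter_le s _
    obtain ⟨ws, hwsP, hwsM⟩ := Nat.sSup_mem hAne hAbdd
    obtain ⟨hws0, hws1, hws2⟩ := hwsP
    set s₀ : Finset (Fin n → ℝ) := s.filter (fun v => 0 < ws v) with hs₀def
    have hs₀sub : s₀ ⊆ s := Finset.filter_subset _ _
    have hwzero : ∀ v ∈ s, v ∉ s₀ → ws v = 0 := by
      intro v hv hvn
      by_contra hne
      exact hvn (Finset.mem_filter.2 ⟨hv, lt_of_le_of_ne (hws0 v hv) (Ne.symm hne)⟩)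
    have hsum0 : ∑ v ∈ s₀, ws v = 1 := by
      rw [← hws1]
      exact Finset.sum_subset hs₀sub (fun v hv hvn => hwzero v hv hvn)
    have hcombo0 : ∑ v ∈ s₀, ws v • v = z := by
      rw [← hws2]
      exact Finset.sum_subset hs₀sub (fun v hv hvn => by rw [hwzero v hv hvn, zero_smul])
    have hs₀ne : s₀.Nonempty := by
      by_contra h
      rw [Finset.not_nonempty_iff_eq_empty] at h
      rw [h, Finset.sum_empty] at hsum0
      norm_num at hsum0
    have hzs₀ : z ∈ convexHull ℝ (s₀ : Set (Fin n → ℝ)) := by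
      rw [Finset.mem_convexHull']
      exact ⟨ws, fun v hv => (Finset.mem_filter.1 hv).2.le, hsum0, hcombo0⟩
    by_cases hcase : s = s₀
    · -- all weights positive
      refine mem_of_pos_weights hXc hXne hXs
        (fun v hv => hclX v (subset_convexHull ℝ _ hv)) ws ?_ hws1 hws2
      intro v hv
      rw [hcase] at hv
      exact (Finset.mem_filter.1 hv).2
    · -- proper face case
      have hss : s₀ ⊂ s := hs₀sub.ssubset_of_ne (fun h => hcase h.symm)
      obtain ⟨v₀, hv₀s, hv₀⟩ := Finset.exists_of_ssubset hss
      have hrestne : (s \ s₀).Nonempty := ⟨v₀, Finset.mem_sdiff.2 ⟨hv₀s, hv₀⟩⟩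
      -- maximal support property
      have hmax : ∀ w, PP w → ∀ v ∈ s, 0 < w v → v ∈ s₀ := by
        intro w hw v hv hpos
        by_contra hvn
        set w' : (Fin n → ℝ) → ℝ := fun u => (w u + ws u) / 2 with hw'
        have hP' : PP w' := by
          refine ⟨fun u hu => by
            have := hw.1 u hu
            have := hws0 u hu
            positivity, ?_, ?_⟩
          · have : ∑ u ∈ s, w' u = (∑ u ∈ s, w u + ∑ u ∈ s, ws u) / 2 := by
              rw [← Finset.sum_add_distrib, ← Finset.sum_div]
            rw [this, hw.2.1, hws1]
            norm_num
          · have : ∀ u ∈ s, w' u • u = (2:ℝ)⁻¹ • (w u • u) + (2:ℝ)⁻¹ • (ws u • u) := by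
              intro u _
              rw [smul_smul, smul_smul, ← add_smul]
              congr 1
              rw [hw']
              ring
            rw [Finset.sum_congr rfl this, Finset.sum_add_distrib, ← Finset.smul_sum,
              ← Finset.smul_sum, hw.2.2, hws2, ← add_smul]
            norm_num
        have hsub' : insert v s₀ ⊆ s.filter (fun u => 0 < w' u) := by
          intro u hu
          rcases Finset.mem_insert.1 hu with rfl | hu₀
          · refine Finset.mem_filter.2 ⟨hv, ?_⟩
            have := hws0 u hv
            rw [hw']
            positivity
          · refine Finset.mem_filter.2 ⟨hs₀sub hu₀, ?_⟩
            have h1 := (Finset.mem_filter.1 hu₀).2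
            have h2 := hw.1 u (hs₀sub hu₀)
            rw [hw']
            positivity
        have hcard1 : s₀.card + 1 ≤ (s.filter fun u => 0 < w' u).card := by
          calc s₀.card + 1 = (insert v s₀).card := (Finset.card_insert_of_notMem hvn).symm
          _ ≤ _ := Finset.card_le_card hsub'
        have hmem : (s.filter fun u => 0 < w' u).card ∈ A := ⟨w', hP', rfl⟩
        have hle' := le_csSup hAbdd hmem
        have hs₀card : s₀.card = sSup A := hwsM
        omega
      -- disjointness of conv (s \ s₀) from affine span of s₀
      have hdisj : ∀ q ∈ convexHull ℝ ((s \ s₀ : Finset (Fin n → ℝ)) : Set (Fin n → ℝ)),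
          q ∉ affineSpan ℝ (s₀ : Set (Fin n → ℝ)) := by
        intro q hq hqa
        obtain ⟨β, hβ0, hβ1, hβq⟩ := Finset.mem_convexHull'.1 hq
        -- affine representation of q over s₀
        have hqa' : q ∈ affineSpan ℝ (Set.range (fun x : {x // x ∈ s₀} => (x : Fin n → ℝ))) := by
          rwa [Subtype.range_coe_subtype]
        obtain ⟨fs, γw, hγ1, hγq⟩ := eq_affineCombination_of_mem_affineSpan hqa'
        have hγq' : q = ∑ i ∈ fs, γw i • i.val := by
          rw [hγq, affineCombination_eq_centerMass hγ1, Finset.centerMass_eq_of_sum_1 _ _ hγ1]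
        set γ : (Fin n → ℝ) → ℝ := fun u => ∑ i ∈ fs.filter (fun i => i.val = u), γw i
          with hγ
        have hγsum : ∑ u ∈ s₀, γ u = 1 := by
          rw [hγ, ← hγ1]
          exact Finset.sum_fiberwise_of_maps_to (fun i _ => i.2) γw
        have hγcombo : ∑ u ∈ s₀, γ u • u = q := by
          have h1 : ∀ u ∈ s₀, γ u • u = ∑ i ∈ fs.filter (fun i => i.val = u), γw i • u := by
            intro u _
            rw [hγ, Finset.sum_smul]
          have h2 : ∑ u ∈ s₀, ∑ i ∈ fs.filter (fun i => i.val = u), γw i • i.val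
              = ∑ i ∈ fs, γw i • i.val :=
            Finset.sum_fiberwise_of_maps_to (fun i _ => i.2) _
          rw [Finset.sum_congr rfl h1, hγq', ← h2]
          refine Finset.sum_congr rfl (fun u _ => ?_)
          refine Finset.sum_congr rfl (fun i hi => ?_)
          rw [(Finset.mem_filter.1 hi).2]
        -- choose ε
        set m : ℝ := s₀.inf' hs₀ne ws with hm
        have hm0 : 0 < m := by
          rw [hm, Finset.lt_inf'_iff]
          exact fun u hu => (Finset.mem_filter.1 hu).2
        set G : ℝ := s₀.sup' hs₀ne (fun u => |γ u|) with hG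
        have hG0 : 0 ≤ G := by
          obtain ⟨u, hu⟩ := hs₀ne
          exact le_trans (abs_nonneg (γ u)) (Finset.le_sup' (fun u => |γ u|) hu)
        set ε : ℝ := m / (G + 1) with hε
        have hε0 : 0 < ε := by positivity
        have hεG : ∀ u ∈ s₀, ε * γ u ≤ ws u := by
          intro u hu
          have h1 : γ u ≤ |γ u| := le_abs_self _
          have h2 : |γ u| ≤ G := Finset.le_sup' (fun u => |γ u|) hu
          have h3 : m ≤ ws u := Finset.inf'_le _ hu
          have h4 : ε * γ u ≤ ε * G := by nlinarith
          have h5 : ε * G < m := by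
            rw [hε]
            rw [div_mul_eq_mul_div, div_lt_iff₀ (by positivity)]
            nlinarith
          linarith
        -- new representation
        set w'' : (Fin n → ℝ) → ℝ := fun u => if u ∈ s₀ then ws u - ε * γ u else ε * β u with hw''
        have hsum_split : ∀ (φ : (Fin n → ℝ) → (Fin n → ℝ)),
            ∑ u ∈ s \ s₀, φ u + ∑ u ∈ s₀, φ u = ∑ u ∈ s, φ u :=
          fun φ => Finset.sum_sdiff hs₀sub
        have hsum_splitR : ∀ (φ : (Fin n → ℝ) → ℝ),
            ∑ u ∈ s \ s₀, φ u + ∑ u ∈ s₀, φ u = ∑ u ∈ s, φ u :=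
          fun φ => Finset.sum_sdiff hs₀sub
        have hw''s₀ : ∀ u ∈ s₀, w'' u = ws u - ε * γ u := by
          intro u hu
          rw [hw'']
          simp [hu]
        have hw''rest : ∀ u ∈ s \ s₀, w'' u = ε * β u := by
          intro u hu
          rw [hw'']
          simp [(Finset.mem_sdiff.1 hu).2]
        have hP'' : PP w'' := by
          refine ⟨?_, ?_, ?_⟩
          · intro u hu
            by_cases hu₀ : u ∈ s₀
            · rw [hw''s₀ u hu₀]
              have := hεG u hu₀
              linarith
            · rw [hw''rest u (Finset.mem_sdiff.2 ⟨hu, hu₀⟩)]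
              have := hβ0 u (Finset.mem_sdiff.2 ⟨hu, hu₀⟩)
              positivity
          · rw [← hsum_splitR w'']
            rw [Finset.sum_congr rfl hw''rest, Finset.sum_congr rfl hw''s₀]
            rw [Finset.sum_sub_distrib, ← Finset.mul_sum, ← Finset.mul_sum, hβ1, hγsum, hsum0]
            ring
          · have h1 : ∑ u ∈ s, w'' u • u
                = ∑ u ∈ s \ s₀, w'' u • u + ∑ u ∈ s₀, w'' u • u := (hsum_split _).symm
            rw [h1]
            have h2 : ∑ u ∈ s \ s₀, w'' u • u = ε • (∑ u ∈ s \ s₀, β u • u) := by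
              rw [Finset.smul_sum]
              refine Finset.sum_congr rfl (fun u hu => ?_)
              rw [hw''rest u hu, mul_smul]
            have h3 : ∑ u ∈ s₀, w'' u • u = z - ε • q := by
              have : ∀ u ∈ s₀, w'' u • u = ws u • u - ε • (γ u • u) := by
                intro u hu
                rw [hw''s₀ u hu, sub_smul, smul_smul]
              rw [Finset.sum_congr rfl this, Finset.sum_sub_distrib, hcombo0, ← Finset.smul_sum,
                hγcombo]
            rw [h2, h3, hβq]
            module
        -- contradiction with maximality
        have hv₁ : ∃ v₁ ∈ s \ s₀, 0 < β v₁ := by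
          by_contra h
          push_neg at h
          have : ∀ v₁ ∈ s \ s₀, β v₁ = 0 :=
            fun v₁ hv₁ => le_antisymm (h v₁ hv₁) (hβ0 v₁ hv₁)
          rw [Finset.sum_congr rfl this, Finset.sum_const_zero] at hβ1
          norm_num at hβ1
        obtain ⟨v₁, hv₁mem, hv₁pos⟩ := hv₁
        have hv₁s : v₁ ∈ s := (Finset.mem_sdiff.1 hv₁mem).1
        have hv₁n : v₁ ∉ s₀ := (Finset.mem_sdiff.1 hv₁mem).2
        have : 0 < w'' v₁ := by
          rw [hw''rest v₁ hv₁mem]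
          positivity
        exact hv₁n (hmax w'' hP'' v₁ hv₁s this)
      -- exposing functional
      obtain ⟨b, hbconst, hbsep⟩ := exists_exposing s₀ (s \ s₀) hrestne hs₀ne hdisj
      obtain ⟨u₀, hu₀⟩ := id hs₀ne
      set ms : ℝ := s.inf' hsne (lf b) with hms
      have hmsval : ms = lf b u₀ := by
        apply le_antisymm (Finset.inf'_le _ (hs₀sub hu₀))
        apply Finset.le_inf'
        intro v hv
        by_cases hv₀' : v ∈ s₀
        · exact (hbconst u₀ hu₀ v hv₀').le
        · exact (hbsep v (Finset.mem_sdiff.2 ⟨hv, hv₀'⟩) u₀ hu₀).le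
      have hfilter : s.filter (fun v => lf b v = ms) = s₀ := by
        ext v
        simp only [Finset.mem_filter]
        constructor
        · rintro ⟨hv, hveq⟩
          by_contra hvn
          have := hbsep v (Finset.mem_sdiff.2 ⟨hv, hvn⟩) u₀ hu₀
          rw [← hmsval, hveq] at this
          exact lt_irrefl _ this
        · intro hv₀'
          exact ⟨hs₀sub hv₀', by rw [hbconst v hv₀' u₀ hu₀, ← hmsval]⟩
      -- t side face
      set mt : ℝ := t.inf' htne (lf b) with hmt
      set t₀ : Finset (Fin n → ℝ) := t.filter (fun v => lf b v = mt) with ht₀def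
      have ht₀sub : t₀ ⊆ t := Finset.filter_subset _ _
      have ht₀ne : t₀.Nonempty := by
        obtain ⟨i, hi, hival⟩ := t.exists_mem_eq_inf' htne (lf b)
        exact ⟨i, Finset.mem_filter.2 ⟨hi, hival.symm⟩⟩
      -- values on the faces
      have hs₀val : ∀ v ∈ s₀, lf b v = ms := fun v hv => by
        rw [hbconst v hv u₀ hu₀, ← hmsval]
      have ht₀val : ∀ v ∈ t₀, lf b v = mt := fun v hv => (Finset.mem_filter.1 hv).2
      -- face descent
      have hdescent : (X ∩ convexHull ℝ (s₀ : Set (Fin n → ℝ)))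
            + (Y ∩ convexHull ℝ (t₀ : Set (Fin n → ℝ)))
          = convexHull ℝ (s₀ : Set (Fin n → ℝ)) + convexHull ℝ (t₀ : Set (Fin n → ℝ)) := by
        apply Set.Subset.antisymm
        · exact Set.add_subset_add inter_subset_right inter_subset_right
        · rintro d ⟨p, hp, q, hq, rfl⟩
          have hpq : p + q ∈ X + Y := by
            rw [hXY]
            refine Set.add_mem_add ?_ ?_
            · exact convexHull_mono (by exact_mod_cast Finset.coe_subset.2 hs₀sub) hp
            · exact convexHull_mono (by exact_mod_cast Finset.coe_subset.2 ht₀sub) hq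
          obtain ⟨x, hx, y, hy, hxyeq0⟩ := hpq
          have hxyeq : x + y = p + q := hxyeq0
          have hxv : ms ≤ lf b x := lf_ge_on_hull (fun v hv => Finset.inf'_le _ hv) (hXs hx)
          have hyv : mt ≤ lf b y := lf_ge_on_hull (fun v hv => Finset.inf'_le _ hv) (hYt hy)
          have hpv : lf b p = ms := lf_eq_on_hull hs₀val hp
          have hqv : lf b q = mt := lf_eq_on_hull ht₀val hq
          have hsum : lf b x + lf b y = ms + mt := by
            rw [← map_add, hxyeq, map_add, hpv, hqv]
          have hxeq : lf b x = ms := by linarith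
          have hyeq : lf b y = mt := by linarith
          have hxface : x ∈ convexHull ℝ (s₀ : Set (Fin n → ℝ)) := by
            rw [← hfilter]
            rw [← face_eq hsne b]
            exact ⟨hXs hx, hxeq⟩
          have hyface : y ∈ convexHull ℝ (t₀ : Set (Fin n → ℝ)) := by
            rw [ht₀def, ← face_eq htne b]
            exact ⟨hYt hy, hyeq⟩
          exact ⟨x, ⟨hx, hxface⟩, y, ⟨hy, hyface⟩, hxyeq⟩
      -- apply induction hypothesis
      have hcards : s₀.card + t₀.card ≤ N := by
        have h1 : s₀.card < s.card := Finset.card_lt_card hss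
        have h2 : t₀.card ≤ t.card := Finset.card_le_card ht₀sub
        omega
      have := IH s₀ t₀ hcards hs₀ne ht₀ne
        (X ∩ convexHull ℝ (s₀ : Set (Fin n → ℝ)))
        (Y ∩ convexHull ℝ (t₀ : Set (Fin n → ℝ)))
        (hXc.inter (convex_convexHull ℝ _)) (hYc.inter (convex_convexHull ℝ _))
        inter_subset_right inter_subset_right hdescent
      exact (this hzs₀).1


theorem stmt4 (n : ℕ) (s' s'' : Finset (Fin n → ℝ)) (h' : s'.Nonempty) (h'' : s''.Nonempty)
    (C' C'' C : Set (Fin n → ℝ))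
    (hC' : C' = convexHull ℝ ↑s') (hC'' : C'' = convexHull ℝ ↑s'') (hC : C = C' + C'')
    (D : Set (Fin n → ℝ))
    (hD : ∃ a : Fin n → ℝ,
      D = {x ∈ C | (∑ t, x t * a t) = sInf ((fun x => ∑ t, x t * a t) '' C)}) :
    D = {x ∈ C' | ∃ y ∈ C'', x + y ∈ D} + {y ∈ C'' | ∃ x ∈ C', x + y ∈ D} ∧
    ∀ X Y : Set (Fin n → ℝ), Convex ℝ X → Convex ℝ Y → X ⊆ C' → Y ⊆ C'' → X + Y = D →
      X = {x ∈ C' | ∃ y ∈ C'', x + y ∈ D} ∧ Y = {y ∈ C'' | ∃ x ∈ C', x + y ∈ D} := by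
  classical
  obtain ⟨a, hDdef⟩ := hD
  set m' : ℝ := s'.inf' h' (lf a) with hm'
  set m'' : ℝ := s''.inf' h'' (lf a) with hm''
  obtain ⟨x₀, hx₀s, hx₀val⟩ := s'.exists_mem_eq_inf' h' (lf a)
  obtain ⟨y₀, hy₀s, hy₀val⟩ := s''.exists_mem_eq_inf' h'' (lf a)
  have hx₀C : x₀ ∈ C' := by rw [hC']; exact subset_convexHull ℝ _ hx₀s
  have hy₀C : y₀ ∈ C'' := by rw [hC'']; exact subset_convexHull ℝ _ hy₀s
  have hlbC' : ∀ x ∈ C', m' ≤ lf a x := by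
    intro x hx
    rw [hC'] at hx
    exact lf_ge_on_hull (fun v hv => Finset.inf'_le _ hv) hx
  have hlbC'' : ∀ y ∈ C'', m'' ≤ lf a y := by
    intro y hy
    rw [hC''] at hy
    exact lf_ge_on_hull (fun v hv => Finset.inf'_le _ hv) hy
  have hmin : IsLeast ((fun x => ∑ t, x t * a t) '' C) (m' + m'') := by
    constructor
    · refine ⟨x₀ + y₀, by rw [hC]; exact Set.add_mem_add hx₀C hy₀C, ?_⟩
      show lf a (x₀ + y₀) = m' + m''
      rw [map_add, ← hx₀val, ← hy₀val]
    · rintro r ⟨c, hc, rfl⟩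
      rw [hC] at hc
      obtain ⟨x, hx, y, hy, hxy⟩ := hc
      have hxy' : x + y = c := hxy
      show m' + m'' ≤ lf a c
      rw [← hxy', map_add]
      exact add_le_add (hlbC' x hx) (hlbC'' y hy)
  have hsInf : sInf ((fun x => ∑ t, x t * a t) '' C) = m' + m'' := hmin.csInf_eq
  have hDset : D = {x ∈ C | lf a x = m' + m''} := by
    rw [hDdef, hsInf]
    rfl
  have hPhi : {x ∈ C' | ∃ y ∈ C'', x + y ∈ D} = {x ∈ C' | lf a x = m'} := by
    ext x
    constructor
    · rintro ⟨hxC, y, hyC, hxyD⟩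
      rw [hDset] at hxyD
      obtain ⟨-, hval⟩ := hxyD
      rw [map_add] at hval
      have h1 := hlbC' x hxC
      have h2 := hlbC'' y hyC
      exact ⟨hxC, by linarith⟩
    · rintro ⟨hxC, hxval⟩
      refine ⟨hxC, y₀, hy₀C, ?_⟩
      rw [hDset]
      exact ⟨by rw [hC]; exact Set.add_mem_add hxC hy₀C,
        by rw [map_add, hxval, ← hy₀val]⟩
  have hPsi : {y ∈ C'' | ∃ x ∈ C', x + y ∈ D} = {y ∈ C'' | lf a y = m''} := by
    ext y
    constructor
    · rintro ⟨hyC, x, hxC, hxyD⟩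
      rw [hDset] at hxyD
      obtain ⟨-, hval⟩ := hxyD
      rw [map_add] at hval
      have h1 := hlbC' x hxC
      have h2 := hlbC'' y hyC
      exact ⟨hyC, by linarith⟩
    · rintro ⟨hyC, hyval⟩
      refine ⟨hyC, x₀, hx₀C, ?_⟩
      rw [hDset]
      exact ⟨by rw [hC]; exact Set.add_mem_add hx₀C hyC,
        by rw [map_add, hyval, ← hx₀val]⟩
  have hpart1 : D = {x ∈ C' | lf a x = m'} + {y ∈ C'' | lf a y = m''} := by
    apply Set.Subset.antisymm
    · intro d hd
      rw [hDset] at hd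
      obtain ⟨hdC, hdval⟩ := hd
      rw [hC] at hdC
      obtain ⟨x, hx, y, hy, hxy⟩ := hdC
      have hxy' : x + y = d := hxy
      rw [← hxy', map_add] at hdval
      have h1 := hlbC' x hx
      have h2 := hlbC'' y hy
      exact ⟨x, ⟨hx, by linarith⟩, y, ⟨hy, by linarith⟩, hxy'⟩
    · rintro d ⟨x, ⟨hx, hxv⟩, y, ⟨hy, hyv⟩, hxy⟩
      have hxy' : x + y = d := hxy
      rw [hDset]
      refine ⟨by rw [hC, ← hxy']; exact Set.add_mem_add hx hy, ?_⟩
      rw [← hxy', map_add, hxv, hyv]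
  constructor
  · rw [hPhi, hPsi]
    exact hpart1
  · intro X Y hXc hYc hXC' hYC'' hXYD
    have hDne : D.Nonempty := by
      refine ⟨x₀ + y₀, ?_⟩
      rw [hDset]
      exact ⟨by rw [hC]; exact Set.add_mem_add hx₀C hy₀C,
        by rw [map_add, ← hx₀val, ← hy₀val]⟩
    obtain ⟨d₁, hd₁⟩ := hDne
    rw [← hXYD] at hd₁
    obtain ⟨xd, hxd, yd, hyd, -⟩ := hd₁
    have hXne : X.Nonempty := ⟨xd, hxd⟩
    have hYne : Y.Nonempty := ⟨yd, hyd⟩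
    have hXPhi : X ⊆ {x ∈ C' | ∃ y ∈ C'', x + y ∈ D} := by
      intro x hx
      exact ⟨hXC' hx, yd, hYC'' hyd, by rw [← hXYD]; exact Set.add_mem_add hx hyd⟩
    have hYPsi : Y ⊆ {y ∈ C'' | ∃ x ∈ C', x + y ∈ D} := by
      intro y hy
      exact ⟨hYC'' hy, xd, hXC' hxd, by rw [← hXYD]; exact Set.add_mem_add hxd hy⟩
    set s'₀ : Finset (Fin n → ℝ) := s'.filter (fun v => lf a v = m') with hs'₀def
    set s''₀ : Finset (Fin n → ℝ) := s''.filter (fun v => lf a v = m'') with hs''₀def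
    have hfaceC' : {x ∈ C' | lf a x = m'} = convexHull ℝ (s'₀ : Set (Fin n → ℝ)) := by
      rw [hC']
      exact face_eq h' a
    have hfaceC'' : {y ∈ C'' | lf a y = m''} = convexHull ℝ (s''₀ : Set (Fin n → ℝ)) := by
      rw [hC'']
      exact face_eq h'' a
    have hXsub : X ⊆ convexHull ℝ (s'₀ : Set (Fin n → ℝ)) := by
      intro x hx
      rw [← hfaceC']
      have := hXPhi hx
      rwa [hPhi] at this
    have hYsub : Y ⊆ convexHull ℝ (s''₀ : Set (Fin n → ℝ)) := by
      intro y hy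
      rw [← hfaceC'']
      have := hYPsi hy
      rwa [hPsi] at this
    have hs'₀ne : s'₀.Nonempty := ⟨x₀, Finset.mem_filter.2 ⟨hx₀s, hx₀val.symm⟩⟩
    have hs''₀ne : s''₀.Nonempty := ⟨y₀, Finset.mem_filter.2 ⟨hy₀s, hy₀val.symm⟩⟩
    have hXYfaces : X + Y = convexHull ℝ (s'₀ : Set (Fin n → ℝ))
        + convexHull ℝ (s''₀ : Set (Fin n → ℝ)) := by
      rw [hXYD, hpart1, hfaceC', hfaceC'']
    have h1 : convexHull ℝ (s'₀ : Set (Fin n → ℝ)) ⊆ X :=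
      key (s'₀.card + s''₀.card) s'₀ s''₀ le_rfl hs'₀ne hs''₀ne X Y hXc hYc hXsub hYsub hXYfaces
    have h2 : convexHull ℝ (s''₀ : Set (Fin n → ℝ)) ⊆ Y := by
      refine key (s''₀.card + s'₀.card) s''₀ s'₀ le_rfl hs''₀ne hs'₀ne Y X hYc hXc hYsub hXsub ?_
      rw [add_comm Y X, add_comm (convexHull ℝ (s''₀ : Set (Fin n → ℝ)))]
      exact hXYfaces
    constructor
    · apply Set.Subset.antisymm hXPhi
      intro x hx
      rw [hPhi, hfaceC'] at hx
      exact h1 hx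
    · apply Set.Subset.antisymm hYPsi
      intro y hy
      rw [hPsi, hfaceC''] at hy
      exact h2 hy
end

section
/- Let C', C'' be convex polytopes with C = C' + C'', and let φ: V(C) → V(C') and ψ: V(C) → V(C'') be the maps sending a vertex v of C to the unique x ∈ C' (resp. y ∈ C'') with x + y = v. Then for every edge [v,w] of C there exists λ ∈ [0,1] with φ(w) − φ(v) = λ(w − v) and ψ(w) − ψ(v) = (1 − λ)(w − v). -/
open Pointwise

theorem stmt5 (n : ℕ) (s' s'' : Finset (Fin n → ℝ))
    (C' C'' C : Set (Fin n → ℝ))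
    (hC' : C' = convexHull ℝ ↑s') (hC'' : C'' = convexHull ℝ ↑s'') (hC : C = C' + C'')
    (φ ψ : (Fin n → ℝ) → (Fin n → ℝ))
    (hφψ : ∀ u ∈ Set.extremePoints ℝ C, φ u ∈ C' ∧ ψ u ∈ C'' ∧ φ u + ψ u = u)
    (v w : Fin n → ℝ) (hv : v ∈ Set.extremePoints ℝ C) (hw : w ∈ Set.extremePoints ℝ C)
    (hvw : v ≠ w)
    (hedge : ∃ a : Fin n → ℝ,
      {x ∈ C | (∑ t, x t * a t) = sInf ((fun x => ∑ t, x t * a t) '' C)} = segment ℝ v w) :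
    ∃ lam : ℝ, lam ∈ Set.Icc (0 : ℝ) 1 ∧
      φ w - φ v = lam • (w - v) ∧ ψ w - ψ v = (1 - lam) • (w - v) := by
  obtain ⟨a, ha⟩ := hedge
  set f : (Fin n → ℝ) → ℝ := fun x => ∑ t, x t * a t with hf
  have flin : IsLinearMap ℝ f := by
    constructor
    · intro x y; simp [hf, add_mul, Finset.sum_add_distrib]
    · intro c x; simp [hf, Finset.mul_sum, mul_assoc]
  -- v and w lie in the face
  have hvF : v ∈ {x ∈ C | f x = sInf (f '' C)} := by rw [ha]; exact left_mem_segment ℝ v w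
  have hwF : w ∈ {x ∈ C | f x = sInf (f '' C)} := by rw [ha]; exact right_mem_segment ℝ v w
  obtain ⟨hvC, hvm⟩ := hvF
  obtain ⟨hwC, hwm⟩ := hwF
  -- C' and C'' nonempty
  obtain ⟨x0, hx0, y0, hy0, hxy0⟩ := Set.mem_add.mp (hC ▸ hvC)
  -- lower bounds on f over C' and C''
  have key : ∀ (s : Finset (Fin n → ℝ)) (D : Set (Fin n → ℝ)), D = convexHull ℝ ↑s →
      ∃ b : ℝ, ∀ x ∈ D, b ≤ f x := by
    intro s D hD
    rcases s.eq_empty_or_nonempty with rfl | hs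
    · exact ⟨0, by simp [hD]⟩
    · refine ⟨s.inf' hs f, ?_⟩
      intro x hx
      have : D ⊆ {y | s.inf' hs f ≤ f y} := by
        rw [hD]
        exact convexHull_min (fun u hu => Finset.inf'_le f hu) (convex_halfSpace_ge flin _)
      exact this hx
  obtain ⟨b', hb'⟩ := key s' C' hC'
  obtain ⟨b'', hb''⟩ := key s'' C'' hC''
  have hbddC' : BddBelow (f '' C') := ⟨b', by rintro _ ⟨x, hx, rfl⟩; exact hb' x hx⟩
  have hbddC'' : BddBelow (f '' C'') := ⟨b'', by rintro _ ⟨x, hx, rfl⟩; exact hb'' x hx⟩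
  have hbddC : BddBelow (f '' C) := by
    refine ⟨b' + b'', ?_⟩
    rintro _ ⟨x, hx, rfl⟩
    obtain ⟨x', hx', y', hy', rfl⟩ := Set.mem_add.mp (hC ▸ hx)
    rw [flin.map_add]
    exact add_le_add (hb' _ hx') (hb'' _ hy')
  set m' := sInf (f '' C') with hm'
  set m'' := sInf (f '' C'') with hm''
  set m := sInf (f '' C) with hm
  have hle' : ∀ x ∈ C', m' ≤ f x := fun x hx => csInf_le hbddC' ⟨x, hx, rfl⟩
  have hle'' : ∀ y ∈ C'', m'' ≤ f y := fun y hy => csInf_le hbddC'' ⟨y, hy, rfl⟩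
  have hleC : ∀ x ∈ C, m ≤ f x := fun x hx => csInf_le hbddC ⟨x, hx, rfl⟩
  -- m ≤ m' + m''
  have hmle : m ≤ m' + m'' := by
    have h1 : ∀ y ∈ C'', m - m' ≤ f y := by
      intro y hy
      have h2 : m - f y ≤ m' := by
        have hne : (f '' C').Nonempty := ⟨f x0, x0, hx0, rfl⟩
        apply le_csInf hne
        rintro _ ⟨x, hx, rfl⟩
        have : m ≤ f (x + y) := hleC _ (hC ▸ Set.add_mem_add hx hy)
        rw [flin.map_add] at this; linarith
      linarith
    have h3 : m - m' ≤ m'' := by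
      have hne : (f '' C'').Nonempty := ⟨f y0, y0, hy0, rfl⟩
      apply le_csInf hne
      rintro _ ⟨y, hy, rfl⟩
      exact h1 y hy
    linarith
  -- decompositions of v and w
  obtain ⟨hφv, hψv, hsv⟩ := hφψ v hv
  obtain ⟨hφw, hψw, hsw⟩ := hφψ w hw
  have hfv : f (φ v) + f (ψ v) = m := by rw [← flin.map_add, hsv, hvm]
  have hfw : f (φ w) + f (ψ w) = m := by rw [← flin.map_add, hsw, hwm]
  have hφvm : f (φ v) = m' := le_antisymm (by have := hle'' _ hψv; linarith) (hle' _ hφv)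
  have hψvm : f (ψ v) = m'' := by have := hle' _ hφv; linarith [hle'' _ hψv]
  have hφwm : f (φ w) = m' := le_antisymm (by have := hle'' _ hψw; linarith) (hle' _ hφw)
  have hψwm : f (ψ w) = m'' := by have := hle' _ hφw; linarith [hle'' _ hψw]
  have hmeq : m = m' + m'' := by linarith [hle' _ hφv, hle'' _ hψv]
  -- the mixed points lie on the segment
  have hmix : ∀ x y : Fin n → ℝ, x ∈ C' → y ∈ C'' → f x = m' → f y = m'' →
      x + y ∈ segment ℝ v w := by
    intro x y hx hy hfx hfy
    rw [← ha]
    refine ⟨hC ▸ Set.add_mem_add hx hy, ?_⟩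
    show f (x + y) = m
    rw [flin.map_add, hfx, hfy, hmeq]
  obtain ⟨α, β, hα, hβ, hab, hp⟩ := hmix _ _ hφw hψv hφwm hψvm
  obtain ⟨γ, δ, hγ, hδ, hcd, hq⟩ := hmix _ _ hφv hψw hφvm hψwm
  -- p + q = v + w forces β + δ = 1
  have hpq : α • v + β • w + (γ • v + δ • w) = v + w := by
    rw [hp, hq]; linear_combination hsv + hsw
  have hα' : α = 1 - β := by linarith
  have hγ' : γ = 1 - δ := by linarith
  have hz : (β + δ - 1) • (w - v) = 0 := by
    have : (β + δ - 1) • (w - v)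
        = (α • v + β • w + (γ • v + δ • w)) - (v + w) := by
      rw [hα', hγ']; module
    rw [this, hpq, sub_self]
  have hβδ : β + δ - 1 = 0 := by
    rcases smul_eq_zero.mp hz with h | h
    · exact h
    · exact absurd (by rwa [sub_eq_zero] at h) (Ne.symm hvw)
  refine ⟨β, ⟨hβ, by linarith⟩, ?_, ?_⟩
  · have e1 : φ w - φ v = (φ w + ψ v) - v := by linear_combination - hsv
    rw [e1, ← hp, hα']; module
  · have e2 : ψ w - ψ v = (φ v + ψ w) - v := by linear_combination - hsv
    have hδ' : δ = 1 - β := by linarith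
    rw [e2, ← hq, hγ', hδ']; module
end

section
/- Let C be a triangle (2-dimensional polytope with three vertices) in ℝⁿ. Then every decomposition C = C' + C'' as a Minkowski sum of convex polytopes C', C'' is of the form C' = λC + β, C'' = (1 − λ)C − β for some λ ∈ [0,1] and β ∈ ℝⁿ. -/
open Pointwise

section Helpers

variable {V : Type*} [AddCommGroup V] [Module ℝ V]

private lemma hull_le (f : V →ₗ[ℝ] ℝ) {S : Set V} {M : ℝ} (h : ∀ y ∈ S, f y ≤ M)
    {x : V} (hx : x ∈ convexHull ℝ S) : f x ≤ M :=
  convexHull_min h (convex_halfSpace_le (LinearMap.isLinear f) M) hx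

private lemma eps_le {F G : V →ₗ[ℝ] ℝ} {x y : V}
    (h : ∀ ε : ℝ, 0 < ε → F x + ε * G x ≤ F y + ε * G y) : F x ≤ F y := by
  by_contra hc
  push_neg at hc
  have hc0 : 0 < F x - F y := by linarith
  have key : ∀ ε : ℝ, 0 < ε → F x - F y ≤ ε * (G y - G x) := by
    intro ε hε
    have := h ε hε
    nlinarith
  rcases le_or_gt (G y - G x) 0 with hd | hd
  · have := key 1 one_pos
    nlinarith
  · have h1 := key ((F x - F y) / (2 * (G y - G x))) (by positivity)
    have h2 : (F x - F y) / (2 * (G y - G x)) * (G y - G x) = (F x - F y) / 2 := by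
      field_simp
    nlinarith

private lemma tri_mem {u v w x : V} :
    x ∈ convexHull ℝ ({u, v, w} : Set V) ↔
      ∃ a b c : ℝ, 0 ≤ a ∧ 0 ≤ b ∧ 0 ≤ c ∧ a + b + c = 1 ∧ x = a • u + b • v + c • w := by
  constructor
  · intro hx
    rw [show ({u, v, w} : Set V) = insert u {v, w} from rfl,
      convexHull_insert ⟨v, by simp⟩, mem_convexJoin] at hx
    obtain ⟨p, hp, z, hz, hseg⟩ := hx
    rw [Set.mem_singleton_iff] at hp
    subst hp
    rw [convexHull_pair] at hz
    obtain ⟨γ, δ, hγ, hδ, hγδ, rfl⟩ := hz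
    obtain ⟨α, β, hα, hβ, hαβ, rfl⟩ := hseg
    refine ⟨α, β * γ, β * δ, hα, by positivity, by positivity, by nlinarith, ?_⟩
    simp only [smul_add, smul_smul]
    abel
  · rintro ⟨a, b, c, ha, hb, hc, habc, rfl⟩
    rcases eq_or_lt_of_le (by positivity : (0:ℝ) ≤ b + c) with h0 | h0
    · have hb0 : b = 0 := by linarith
      have hc0 : c = 0 := by linarith
      have ha1 : a = 1 := by linarith
      rw [hb0, hc0, ha1]
      simpa using subset_convexHull ℝ ({u, v, w} : Set V) (by simp)
    · have hz : (b / (b + c)) • v + (c / (b + c)) • w ∈ convexHull ℝ ({u, v, w} : Set V) := by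
        apply convexHull_mono (show ({v, w} : Set V) ⊆ {u, v, w} by
          intro y hy; simp at hy ⊢; tauto)
        rw [convexHull_pair]
        exact ⟨_, _, by positivity, by positivity, by field_simp, rfl⟩
      have hu : u ∈ convexHull ℝ ({u, v, w} : Set V) :=
        subset_convexHull ℝ _ (by simp)
      have hmem := (convex_convexHull ℝ ({u, v, w} : Set V)) hu hz ha h0.le (by linarith)
      have heq : (b + c) • ((b / (b + c)) • v + (c / (b + c)) • w) = b • v + c • w := by
        rw [smul_add, smul_smul, smul_smul, mul_div_cancel₀ _ h0.ne', mul_div_cancel₀ _ h0.ne']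
      rw [heq] at hmem
      rwa [add_assoc]

private lemma shift_mem_tri {u v w δ : V} :
    u + δ ∈ convexHull ℝ ({u, v, w} : Set V) ↔
      ∃ s t : ℝ, 0 ≤ t ∧ t ≤ s ∧ s ≤ 1 ∧ δ = s • (v - u) + t • (w - v) := by
  rw [tri_mem]
  constructor
  · rintro ⟨a, b, c, ha, hb, hc, habc, heq⟩
    refine ⟨b + c, c, hc, by linarith, by linarith, ?_⟩
    have ha' : a = 1 - b - c := by linarith
    subst ha'
    have hδ : δ = (u + δ) - u := by abel
    rw [hδ, heq]
    module
  · rintro ⟨s, t, ht, hts, hs1, rfl⟩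
    exact ⟨1 - s, s - t, t, by linarith, by linarith, ht, by ring, by module⟩

private lemma rep_eq {e1 e2 : V} (hli : LinearIndependent ℝ ![e1, e2])
    {s t s' t' : ℝ} (h : s • e1 + t • e2 = s' • e1 + t' • e2) : s = s' ∧ t = t' := by
  obtain ⟨h1, h2⟩ := LinearIndependent.pair_iff.mp hli (s - s') (t - t')
    (by rw [sub_smul, sub_smul, sub_add_sub_comm, h, sub_self])
  exact ⟨by linarith, by linarith⟩

private lemma vertex_max {A B : Set V} {u v w : V}
    (hAB : ∀ a ∈ A, ∀ b ∈ B, a + b ∈ convexHull ℝ ({u, v, w} : Set V))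
    {p a0 b0 : V} (hb0 : b0 ∈ B) (hab : a0 + b0 = p)
    (f : V →ₗ[ℝ] ℝ) (hmax : ∀ y ∈ ({u, v, w} : Set V), f y ≤ f p)
    {x : V} (hx : x ∈ A) : f x ≤ f a0 := by
  have h1 : f (x + b0) ≤ f p := hull_le f hmax (hAB x hx b0 hb0)
  have h2 : f p = f a0 + f b0 := by rw [← hab, map_add]
  rw [map_add] at h1
  linarith

private lemma max_at_u {f : V →ₗ[ℝ] ℝ} {u v w : V}
    (h1 : f (v - u) ≤ 0) (h2 : f (v - u) + f (w - v) ≤ 0) :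
    ∀ y ∈ ({u, v, w} : Set V), f y ≤ f u := by
  intro y hy
  have e1 := map_sub f v u
  have e2 := map_sub f w v
  simp only [Set.mem_insert_iff, Set.mem_singleton_iff] at hy
  rcases hy with rfl | rfl | rfl <;> linarith

private lemma max_at_v {f : V →ₗ[ℝ] ℝ} {u v w : V}
    (h1 : 0 ≤ f (v - u)) (h2 : f (w - v) ≤ 0) :
    ∀ y ∈ ({u, v, w} : Set V), f y ≤ f v := by
  intro y hy
  have e1 := map_sub f v u
  have e2 := map_sub f w v
  simp only [Set.mem_insert_iff, Set.mem_singleton_iff] at hy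
  rcases hy with rfl | rfl | rfl <;> linarith

private lemma max_at_w {f : V →ₗ[ℝ] ℝ} {u v w : V}
    (h1 : 0 ≤ f (w - v)) (h2 : 0 ≤ f (v - u) + f (w - v)) :
    ∀ y ∈ ({u, v, w} : Set V), f y ≤ f w := by
  intro y hy
  have e1 := map_sub f v u
  have e2 := map_sub f w v
  simp only [Set.mem_insert_iff, Set.mem_singleton_iff] at hy
  rcases hy with rfl | rfl | rfl <;> linarith

private lemma edge_eq {A B : Set V} {u v w : V}
    (hAB : ∀ a ∈ A, ∀ b ∈ B, a + b ∈ convexHull ℝ ({u, v, w} : Set V))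
    (F G1 G2 : V →ₗ[ℝ] ℝ) {p q ap aq bp bq : V}
    (hap : ap ∈ A) (haq : aq ∈ A) (hbp : bp ∈ B) (hbq : bq ∈ B)
    (hp : ap + bp = p) (hq : aq + bq = q)
    (hmp : ∀ ε : ℝ, 0 < ε → ∀ y ∈ ({u, v, w} : Set V), (F + ε • G1) y ≤ (F + ε • G1) p)
    (hmq : ∀ ε : ℝ, 0 < ε → ∀ y ∈ ({u, v, w} : Set V), (F + ε • G2) y ≤ (F + ε • G2) q) :
    F ap = F aq := by
  have h1 : F aq ≤ F ap := by
    apply eps_le (G := G1)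
    intro ε hε
    have := vertex_max hAB hbp hp (F + ε • G1) (hmp ε hε) haq
    simpa [LinearMap.add_apply, LinearMap.smul_apply, smul_eq_mul] using this
  have h2 : F ap ≤ F aq := by
    apply eps_le (G := G2)
    intro ε hε
    have := vertex_max hAB hbq hq (F + ε • G2) (hmq ε hε) hap
    simpa [LinearMap.add_apply, LinearMap.smul_apply, smul_eq_mul] using this
  linarith


private lemma exists_dual {e1 e2 : V} (hli : LinearIndependent ℝ ![e1, e2]) (c1 c2 : ℝ) :
    ∃ f : V →ₗ[ℝ] ℝ, f e1 = c1 ∧ f e2 = c2 := by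
  set p := Submodule.span ℝ (Set.range ![e1, e2]) with hp
  have he1 : e1 ∈ p := Submodule.subset_span ⟨0, rfl⟩
  have he2 : e2 ∈ p := Submodule.subset_span ⟨1, rfl⟩
  let b : Module.Basis (Fin 2) ℝ p := Module.Basis.span hli
  obtain ⟨q, hq⟩ := Submodule.exists_isCompl p
  let π := Submodule.projectionOnto p q hq
  let g : p →ₗ[ℝ] ℝ := b.constr ℝ ![c1, c2]
  refine ⟨g ∘ₗ (π : V →ₗ[ℝ] p), ?_, ?_⟩
  · have hb : (⟨e1, he1⟩ : p) = b 0 := by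
      apply Subtype.ext
      rw [show (b 0 : V) = ![e1, e2] 0 from congrArg Subtype.val (Module.Basis.span_apply hli 0)]
      rfl
    have hπ : π e1 = ⟨e1, he1⟩ := Submodule.projectionOnto_apply_left hq ⟨e1, he1⟩
    simp only [LinearMap.comp_apply, hπ, hb]
    rw [show g (b 0) = ![c1, c2] 0 from Module.Basis.constr_basis b ℝ ![c1, c2] 0]
    rfl
  · have hb : (⟨e2, he2⟩ : p) = b 1 := by
      apply Subtype.ext
      rw [show (b 1 : V) = ![e1, e2] 1 from congrArg Subtype.val (Module.Basis.span_apply hli 1)]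
      rfl
    have hπ : π e2 = ⟨e2, he2⟩ := Submodule.projectionOnto_apply_left hq ⟨e2, he2⟩
    simp only [LinearMap.comp_apply, hπ, hb]
    rw [show g (b 1) = ![c1, c2] 1 from Module.Basis.constr_basis b ℝ ![c1, c2] 1]
    rfl


private lemma summand {u v w : V}
    (hli : LinearIndependent ℝ ![v - u, w - v])
    {A B : Set V} (hA : Convex ℝ A)
    (hAB : ∀ a ∈ A, ∀ b ∈ B, a + b ∈ convexHull ℝ ({u, v, w} : Set V))
    {au av aw bu bv : V} (hau : au ∈ A) (hav : av ∈ A) (haw : aw ∈ A)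
    (hbu : bu ∈ B) (hbv : bv ∈ B)
    {lam : ℝ} (h0 : 0 ≤ lam) (h1 : lam ≤ 1)
    (hsu : au + bu = u) (hsv : av + bv = v)
    (h2 : av = au + lam • (v - u)) (h3 : aw = au + lam • (w - u)) :
    A = (fun x => lam • x + (au - lam • u)) '' convexHull ℝ ({u, v, w} : Set V) := by
  apply Set.Subset.antisymm
  · -- A ⊆ image
    intro x hx
    have m1 : u + (x - au) ∈ convexHull ℝ ({u, v, w} : Set V) := by
      have h := hAB x hx bu hbu
      have e : x + bu = u + (x - au) := by rw [← hsu]; abel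
      rwa [e] at h
    obtain ⟨s, t, ht0, hts, hs1, hδ⟩ := shift_mem_tri.mp m1
    have m2 : u + ((1 + s - lam) • (v - u) + t • (w - v)) ∈
        convexHull ℝ ({u, v, w} : Set V) := by
      have h := hAB x hx bv hbv
      have hbv' : bv = v - av := by rw [← hsv]; abel
      have e : x + bv = u + ((1 + s - lam) • (v - u) + t • (w - v)) := by
        have hx' : x = au + (s • (v - u) + t • (w - v)) := by rw [← hδ]; abel
        rw [hbv', h2, hx']
        module
      rwa [e] at h
    obtain ⟨s2, t2, ht20, ht2s, hs21, hδ2⟩ := shift_mem_tri.mp m2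
    obtain ⟨hs2, ht2⟩ := rep_eq hli hδ2
    have hslam : s ≤ lam := by linarith
    rcases h0.lt_or_eq with hl0 | hl0
    · refine ⟨u + ((s / lam) • (v - u) + (t / lam) • (w - v)), ?_, ?_⟩
      · apply shift_mem_tri.mpr
        refine ⟨s / lam, t / lam, by positivity, by gcongr, (div_le_one hl0).mpr hslam, rfl⟩
      · show lam • (u + ((s / lam) • (v - u) + (t / lam) • (w - v))) + (au - lam • u) = x
        have hx' : x = au + (s • (v - u) + t • (w - v)) := by rw [← hδ]; abel
        rw [hx']
        have c1 : lam • ((s / lam) • (v - u)) = s • (v - u) := by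
          rw [smul_smul, mul_div_cancel₀ _ hl0.ne']
        have c2 : lam • ((t / lam) • (w - v)) = t • (w - v) := by
          rw [smul_smul, mul_div_cancel₀ _ hl0.ne']
        rw [smul_add, smul_add, c1, c2]
        module
    · -- lam = 0
      have hs0 : s = 0 := le_antisymm (by linarith) (le_trans ht0 hts)
      have ht0' : t = 0 := le_antisymm (by linarith) ht0
      have hxau : x = au := by
        have : x - au = 0 := by rw [hδ, hs0, ht0']; simp
        have := sub_eq_zero.mp this
        exact this
      refine ⟨u, subset_convexHull ℝ _ (by simp), ?_⟩
      rw [← hl0, hxau]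
      simp
  · rintro x ⟨y, hy, rfl⟩
    obtain ⟨a, b, c, ha, hb, hc, habc, rfl⟩ := tri_mem.mp hy
    have hmem : a • au + b • av + c • aw ∈ convexHull ℝ ({au, av, aw} : Set V) :=
      tri_mem.mpr ⟨a, b, c, ha, hb, hc, habc, rfl⟩
    have hsub : convexHull ℝ ({au, av, aw} : Set V) ⊆ A := by
      apply convexHull_min _ hA
      intro y hy
      simp only [Set.mem_insert_iff, Set.mem_singleton_iff] at hy
      rcases hy with rfl | rfl | rfl <;> assumption
    have ha' : a = 1 - b - c := by linarith
    subst ha'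
    have heq : lam • ((1 - b - c) • u + b • v + c • w) + (au - lam • u)
        = (1 - b - c) • au + b • av + c • aw := by
      rw [h2, h3]
      module
    show lam • ((1 - b - c) • u + b • v + c • w) + (au - lam • u) ∈ A
    rw [heq]
    exact hsub hmem


end Helpers

theorem stmt6 (n : ℕ) (u v w : Fin n → ℝ)
    (huvw : ¬ Collinear ℝ ({u, v, w} : Set (Fin n → ℝ)))
    (C : Set (Fin n → ℝ)) (hC : C = convexHull ℝ ({u, v, w} : Set (Fin n → ℝ)))
    (s' s'' : Finset (Fin n → ℝ)) (C' C'' : Set (Fin n → ℝ))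
    (hC' : C' = convexHull ℝ ↑s') (hC'' : C'' = convexHull ℝ ↑s'')
    (hsum : C = C' + C'') :
    ∃ lam : ℝ, lam ∈ Set.Icc (0 : ℝ) 1 ∧ ∃ β : Fin n → ℝ,
      C' = (fun x => lam • x + β) '' C ∧ C'' = (fun x => (1 - lam) • x - β) '' C := by
  have hC'conv : Convex ℝ C' := hC' ▸ convex_convexHull ℝ _
  have hC''conv : Convex ℝ C'' := hC'' ▸ convex_convexHull ℝ _
  have hAB : ∀ a ∈ C', ∀ b ∈ C'', a + b ∈ convexHull ℝ ({u, v, w} : Set (Fin n → ℝ)) := by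
    intro a ha b hb
    rw [← hC, hsum]
    exact Set.add_mem_add ha hb
  have hBA : ∀ b ∈ C'', ∀ a ∈ C', b + a ∈ convexHull ℝ ({u, v, w} : Set (Fin n → ℝ)) := by
    intro b hb a ha
    rw [add_comm]
    exact hAB a ha b hb
  -- linear independence of the edge vectors
  have hli : LinearIndependent ℝ ![v - u, w - v] := by
    rw [LinearIndependent.pair_iff]
    intro s t hst
    by_contra hcon
    apply huvw
    rcases eq_or_ne t 0 with ht | ht
    · subst ht
      have hs : s ≠ 0 := by
        intro h; exact hcon ⟨h, rfl⟩
      have hvu : v - u = 0 := by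
        have := hst
        simp only [zero_smul, add_zero] at this
        exact (smul_eq_zero.mp this).resolve_left hs
      have hvu' : v = u := by
        have := sub_eq_zero.mp hvu; exact this
      rw [hvu']
      rw [Set.insert_idem]
      exact collinear_pair ℝ u w
    · rw [collinear_iff_of_mem (Set.mem_insert u {v, w})]
      refine ⟨v - u, ?_⟩
      intro p hp
      simp only [Set.mem_insert_iff, Set.mem_singleton_iff] at hp
      have hwv : w - v = (-(s / t)) • (v - u) := by
        have h5 : t • (w - v) = -(s • (v - u)) := by
          rw [← neg_eq_iff_eq_neg, neg_eq_iff_add_eq_zero]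
          rw [add_comm]
          exact hst
        have h6 := congrArg (fun z => t⁻¹ • z) h5
        simp only [smul_smul, inv_mul_cancel₀ ht, one_smul] at h6
        rw [h6]
        rw [smul_neg, smul_smul]
        rw [neg_smul]
        congr 1
        congr 1
        field_simp
      rcases hp with rfl | rfl | rfl
      · exact ⟨0, by simp⟩
      · exact ⟨1, by simp⟩
      · refine ⟨1 - s / t, ?_⟩
        rw [vadd_eq_add]
        have hthis : p = (p - v) + (v - u) + u := by abel
        rw [hthis, hwv]
        module
  -- the three dual functionals
  obtain ⟨hu0, hue1, hue2⟩ := exists_dual hli (-1) 0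
  obtain ⟨hv0, hve1, hve2⟩ := exists_dual hli 1 (-1)
  obtain ⟨hw0, hwe1, hwe2⟩ := exists_dual hli 0 1
  -- decompositions of the vertices
  have humem : u ∈ C' + C'' := by
    rw [← hsum, hC]; exact subset_convexHull ℝ _ (by simp)
  have hvmem : v ∈ C' + C'' := by
    rw [← hsum, hC]; exact subset_convexHull ℝ _ (by simp)
  have hwmem : w ∈ C' + C'' := by
    rw [← hsum, hC]; exact subset_convexHull ℝ _ (by simp)
  obtain ⟨au, hau, bu, hbu, hsu⟩ := Set.mem_add.mp humem
  obtain ⟨av, hav, bv, hbv, hsv⟩ := Set.mem_add.mp hvmem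
  obtain ⟨aw, haw, bw, hbw, hsw⟩ := Set.mem_add.mp hwmem
  -- edge uv : F1 = hu0 + hv0, values on (v-u, w-v) : (0, -1)
  have hF1 : (hu0 + hv0) au = (hu0 + hv0) av := by
    refine edge_eq hAB (hu0 + hv0) hu0 hv0 hau hav hbu hbv hsu hsv ?_ ?_
    · intro ε hε
      apply max_at_u <;>
        simp only [LinearMap.add_apply, LinearMap.smul_apply, smul_eq_mul,
          hue1, hue2, hve1, hve2] <;> nlinarith
    · intro ε hε
      apply max_at_v <;>
        simp only [LinearMap.add_apply, LinearMap.smul_apply, smul_eq_mul,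
          hue1, hue2, hve1, hve2] <;> nlinarith
  -- edge vw : F2 = hv0 + hw0, values (1, 0)
  have hF2 : (hv0 + hw0) av = (hv0 + hw0) aw := by
    refine edge_eq hAB (hv0 + hw0) hv0 hw0 hav haw hbv hbw hsv hsw ?_ ?_
    · intro ε hε
      apply max_at_v <;>
        simp only [LinearMap.add_apply, LinearMap.smul_apply, smul_eq_mul,
          hve1, hve2, hwe1, hwe2] <;> nlinarith
    · intro ε hε
      apply max_at_w <;>
        simp only [LinearMap.add_apply, LinearMap.smul_apply, smul_eq_mul,
          hve1, hve2, hwe1, hwe2] <;> nlinarith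
  -- edge wu : F3 = hw0 + hu0, values (-1, 1)
  have hF3 : (hw0 + hu0) aw = (hw0 + hu0) au := by
    refine edge_eq hAB (hw0 + hu0) hw0 hu0 haw hau hbw hbu hsw hsu ?_ ?_
    · intro ε hε
      apply max_at_w <;>
        simp only [LinearMap.add_apply, LinearMap.smul_apply, smul_eq_mul,
          hwe1, hwe2, hue1, hue2] <;> nlinarith
    · intro ε hε
      apply max_at_u <;>
        simp only [LinearMap.add_apply, LinearMap.smul_apply, smul_eq_mul,
          hwe1, hwe2, hue1, hue2] <;> nlinarith
  -- edge uv : av - au = s1 • (v-u)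
  obtain ⟨s1, t1, ht10, ht1s, hs11, hδ1⟩ : ∃ s t : ℝ, 0 ≤ t ∧ t ≤ s ∧ s ≤ 1 ∧
      av - au = s • (v - u) + t • (w - v) := by
    apply shift_mem_tri.mp
    have h := hAB av hav bu hbu
    have e : av + bu = u + (av - au) := by rw [← hsu]; abel
    rwa [e] at h
  have ht1 : t1 = 0 := by
    have hz : (hu0 + hv0) (av - au) = 0 := by rw [map_sub, hF1, sub_self]
    rw [hδ1] at hz
    simp only [map_add, map_smul, LinearMap.add_apply, hue1, hue2, hve1, hve2,
      smul_eq_mul] at hz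
    linarith
  -- edge vw : aw - av = t2 • (w-v)
  obtain ⟨s2, t2, ht20, ht2s, hs21, hδ2⟩ : ∃ s t : ℝ, 0 ≤ t ∧ t ≤ s ∧ s ≤ 1 ∧
      (v - u) + (aw - av) = s • (v - u) + t • (w - v) := by
    apply shift_mem_tri.mp
    have h := hAB aw haw bv hbv
    have e : aw + bv = u + ((v - u) + (aw - av)) := by rw [← hsv]; abel
    rwa [e] at h
  have hs2 : s2 = 1 := by
    have hz : (hv0 + hw0) (aw - av) = 0 := by rw [map_sub, ← hF2, sub_self]
    have hδ2' : aw - av = (s2 - 1) • (v - u) + t2 • (w - v) := by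
      have : aw - av = (s2 • (v - u) + t2 • (w - v)) - (v - u) := by
        rw [← hδ2]; abel
      rw [this]; module
    rw [hδ2'] at hz
    simp only [map_add, map_smul, LinearMap.add_apply, hve1, hve2, hwe1, hwe2,
      smul_eq_mul] at hz
    linarith
  -- edge wu : au - aw = (s3-1) • (v-u) + (t3-1) • (w-v), t3 = s3
  obtain ⟨s3, t3, ht30, ht3s, hs31, hδ3⟩ : ∃ s t : ℝ, 0 ≤ t ∧ t ≤ s ∧ s ≤ 1 ∧
      ((v - u) + (w - v)) + (au - aw) = s • (v - u) + t • (w - v) := by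
    apply shift_mem_tri.mp
    have h := hAB au hau bw hbw
    have e : au + bw = u + (((v - u) + (w - v)) + (au - aw)) := by rw [← hsw]; abel
    rwa [e] at h
  have hδ3' : au - aw = (s3 - 1) • (v - u) + (t3 - 1) • (w - v) := by
    have : au - aw = (s3 • (v - u) + t3 • (w - v)) - ((v - u) + (w - v)) := by
      rw [← hδ3]; abel
    rw [this]; module
  have ht3 : t3 = s3 := by
    have hz : (hw0 + hu0) (au - aw) = 0 := by rw [map_sub, ← hF3, sub_self]
    rw [hδ3'] at hz
    simp only [map_add, map_smul, LinearMap.add_apply, hwe1, hwe2, hue1, hue2,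
      smul_eq_mul] at hz
    linarith
  -- relations
  have h2 : av = au + s1 • (v - u) := by
    have : av - au = s1 • (v - u) := by rw [hδ1, ht1]; simp
    rw [← this]; abel
  have h3' : aw = av + t2 • (w - v) := by
    have hδ2' : aw - av = t2 • (w - v) := by
      have : aw - av = (s2 • (v - u) + t2 • (w - v)) - (v - u) := by
        rw [← hδ2]; abel
      rw [this, hs2]; module
    rw [← hδ2']; abel
  rw [ht3] at hδ3'
  have h4' : au = aw + ((s3 - 1) • (v - u) + (s3 - 1) • (w - v)) := by
    rw [← hδ3']; abel
  -- closing the cycle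
  have hz : (s1 + (s3 - 1)) • (v - u) + (t2 + (s3 - 1)) • (w - v) = 0 := by
    have h5 : au + ((s1 + (s3 - 1)) • (v - u) + (t2 + (s3 - 1)) • (w - v)) = au + 0 := by
      rw [add_zero]
      conv_rhs => rw [h4', h3', h2]
      module
    exact add_left_cancel h5
  obtain ⟨hz1, hz2⟩ := rep_eq hli (s := s1 + (s3 - 1)) (t := t2 + (s3 - 1))
    (s' := 0) (t' := 0) (by simpa using hz)
  have hs1t2 : s1 = t2 := by linarith
  set lam := s1 with hlam
  have h0lam : 0 ≤ lam := le_trans ht10 ht1s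
  have h1lam : lam ≤ 1 := hs11
  have h3 : aw = au + lam • (w - u) := by
    rw [h3', h2, ← hs1t2]
    module
  -- b-side relations
  have hbu' : bu = u - au := by rw [← hsu]; abel
  have hbv' : bv = v - av := by rw [← hsv]; abel
  have hbw' : bw = w - aw := by rw [← hsw]; abel
  have hb2 : bv = bu + (1 - lam) • (v - u) := by
    rw [hbv', hbu', h2]; module
  have hb3 : bw = bu + (1 - lam) • (w - u) := by
    rw [hbw', hbu', h3]; module
  have hAeq := summand hli hC'conv hAB hau hav haw hbu hbv h0lam h1lam hsu hsv h2 h3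
  have hBeq := summand hli hC''conv hBA hbu hbv hbw hau hav
    (by linarith : (0:ℝ) ≤ 1 - lam) (by linarith : 1 - lam ≤ 1)
    (by rw [add_comm]; exact hsu) (by rw [add_comm]; exact hsv) hb2 hb3
  refine ⟨lam, ⟨h0lam, h1lam⟩, au - lam • u, ?_, ?_⟩
  · rw [hC]; exact hAeq
  · rw [hC, hBeq]
    have hcon : bu - (1 - lam) • u = -(au - lam • u) := by
      rw [hbu']; module
    have hfun : (fun x : Fin n → ℝ => (1 - lam) • x + (bu - (1 - lam) • u))
        = (fun x : Fin n → ℝ => (1 - lam) • x - (au - lam • u)) := by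
      funext x
      rw [hcon]; abel
    rw [hfun]
end

section
/- (Ostrowski) Let K be a field and P, Q ∈ K[X₁,…,Xₙ] nonzero. Then the Newton polytope of PQ equals the Minkowski sum of the Newton polytopes of P and Q: C(PQ) = C(P) + C(Q). -/
set_option maxHeartbeats 1000000

private lemma stmt7_aux {K : Type*} [Field K] (n : ℕ) (P Q : MvPolynomial (Fin n) K)
    (a₀ b₀ : Fin n →₀ ℕ)
    (hu : ∀ x ∈ P.support, ∀ y ∈ Q.support, x + y = a₀ + b₀ → x = a₀ ∧ y = b₀) :
    (P * Q).coeff (a₀ + b₀) = P.coeff a₀ * Q.coeff b₀ := by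
  rw [MvPolynomial.coeff_mul]
  apply Finset.sum_eq_single (a₀, b₀)
  · rintro ⟨x, y⟩ hxy hne
    rw [Finset.HasAntidiagonal.mem_antidiagonal] at hxy
    by_contra hne0
    have hx : x ∈ P.support := by
      rw [MvPolynomial.mem_support_iff]
      intro h; apply hne0; simp [h]
    have hy : y ∈ Q.support := by
      rw [MvPolynomial.mem_support_iff]
      intro h; apply hne0; simp [h]
    obtain ⟨h1, h2⟩ := hu x hx y hy hxy
    exact hne (by rw [h1, h2])
  · intro h
    exact absurd (h (Finset.HasAntidiagonal.mem_antidiagonal.mpr rfl)) (fun hf => hf)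


open Pointwise

theorem stmt7 {K : Type*} [Field K] (n : ℕ) (P Q : MvPolynomial (Fin n) K)
    (hP : P ≠ 0) (hQ : Q ≠ 0) :
    convexHull ℝ ((fun d : Fin n →₀ ℕ => fun t => (d t : ℝ)) '' ↑(P * Q).support)
      = convexHull ℝ ((fun d : Fin n →₀ ℕ => fun t => (d t : ℝ)) '' ↑P.support)
        + convexHull ℝ ((fun d : Fin n →₀ ℕ => fun t => (d t : ℝ)) '' ↑Q.support) := by
  classical
  set f : (Fin n →₀ ℕ) → (Fin n → ℝ) := fun d => fun t => (d t : ℝ) with hf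
  have fapp : ∀ d t, f d t = (d t : ℝ) := fun d t => rfl
  have fadd : ∀ a b, f (a + b) = f a + f b := by
    intro a b; funext t; simp [fapp]
  have finj : Function.Injective f := by
    intro a b hab
    ext t
    have := congrFun hab t
    rw [fapp, fapp] at this
    exact_mod_cast this
  set A := convexHull ℝ (f '' ↑P.support) with hA
  set B := convexHull ℝ (f '' ↑Q.support) with hB
  set C := convexHull ℝ (f '' ↑(P * Q).support) with hC
  -- easy inclusion
  have h1 : C ⊆ A + B := by
    rw [hA, hB, ← convexHull_add]
    apply convexHull_mono
    intro x hx
    obtain ⟨d, hd, rfl⟩ := hx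
    have hd' := MvPolynomial.support_mul P Q hd
    rw [Finset.mem_add] at hd'
    obtain ⟨a, ha, b, hb, rfl⟩ := hd'
    rw [Set.mem_add]
    exact ⟨f a, Set.mem_image_of_mem f ha, f b, Set.mem_image_of_mem f hb, (fadd a b).symm⟩
  -- A + B as hull of a finite set
  have hABsum : A + B = convexHull ℝ (f '' ↑P.support + f '' ↑Q.support) := by
    rw [convexHull_add, hA, hB]
  -- extreme points of A + B lie in C
  have hep : (A + B).extremePoints ℝ ⊆ C := by
    intro v hv
    obtain ⟨hvAB, hvext⟩ := hv
    rw [Set.mem_add] at hvAB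
    obtain ⟨a, ha, b, hb, hab⟩ := hvAB
    -- uniqueness of decomposition
    have huniq : ∀ a' ∈ A, ∀ b' ∈ B, a' + b' = v → a' = a ∧ b' = b := by
      intro a' ha' b' hb' hab'
      have hsum : a + b' + (a' + b) = v + v := by
        have h3 : a + b' + (a' + b) = (a + b) + (a' + b') := by abel
        rw [h3, hab, hab']
      have hmem : v ∈ openSegment ℝ (a + b') (a' + b) := by
        rw [openSegment_eq_image]
        refine ⟨(1:ℝ)/2, by norm_num, ?_⟩
        funext t
        have ht := congrFun hsum t
        simp only [Pi.add_apply] at ht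
        simp only [Pi.add_apply, Pi.smul_apply, smul_eq_mul]
        linarith
      have h2 := And.intro (hvext (Set.add_mem_add ha hb') (Set.add_mem_add ha' hb) hmem)
        (hvext (Set.add_mem_add ha' hb) (Set.add_mem_add ha hb') (by rw [openSegment_symm]; exact hmem))
      constructor
      · have : a' + b = a + b := by rw [h2.2, ← hab]
        exact add_right_cancel this
      · have : a + b' = a + b := by rw [h2.1, ← hab]
        exact add_left_cancel this
    -- a is extreme in A
    have haep : a ∈ A.extremePoints ℝ := by
      refine ⟨ha, fun a₁ ha₁ a₂ ha₂ hseg => ?_⟩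
      have hseg' : v ∈ openSegment ℝ (a₁ + b) (a₂ + b) := by
        rw [← hab]
        rw [openSegment_eq_image] at hseg ⊢
        obtain ⟨θ, hθ, hsum⟩ := hseg
        refine ⟨θ, hθ, ?_⟩
        funext t
        have ht := congrFun hsum t
        simp only [Pi.add_apply, Pi.smul_apply, smul_eq_mul] at ht ⊢
        rw [← ht]; ring
      have h2 := hvext (Set.add_mem_add ha₁ hb) (Set.add_mem_add ha₂ hb) hseg'
      have : a₁ + b = a + b := by rw [h2, ← hab]
      exact add_right_cancel this
    have hbep : b ∈ B.extremePoints ℝ := by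
      refine ⟨hb, fun b₁ hb₁ b₂ hb₂ hseg => ?_⟩
      have hseg' : v ∈ openSegment ℝ (a + b₁) (a + b₂) := by
        rw [← hab]
        rw [openSegment_eq_image] at hseg ⊢
        obtain ⟨θ, hθ, hsum⟩ := hseg
        refine ⟨θ, hθ, ?_⟩
        funext t
        have ht := congrFun hsum t
        simp only [Pi.add_apply, Pi.smul_apply, smul_eq_mul] at ht ⊢
        rw [← ht]; ring
      have h2 := hvext (Set.add_mem_add ha hb₁) (Set.add_mem_add ha hb₂) hseg'
      have : a + b₁ = a + b := by rw [h2, ← hab]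
      exact add_left_cancel this
    obtain ⟨a₀, ha₀, rfl⟩ := extremePoints_convexHull_subset haep
    obtain ⟨b₀, hb₀, rfl⟩ := extremePoints_convexHull_subset hbep
    -- coefficient of P*Q at a₀ + b₀ is nonzero
    have hcoeff : (P * Q).coeff (a₀ + b₀) = P.coeff a₀ * Q.coeff b₀ := by
      apply stmt7_aux
      intro x hx y hy hxy
      have hsum : f x + f y = v := by
        rw [← fadd, hxy, fadd, hab]
      have hxA : f x ∈ A := by
        rw [hA]; exact subset_convexHull ℝ _ ⟨x, Finset.mem_coe.mpr hx, rfl⟩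
      have hyB : f y ∈ B := by
        rw [hB]; exact subset_convexHull ℝ _ ⟨y, Finset.mem_coe.mpr hy, rfl⟩
      have h12 := huniq (f x) hxA (f y) hyB hsum
      exact ⟨finj h12.1, finj h12.2⟩
    have hmem : a₀ + b₀ ∈ (P * Q).support := by
      rw [MvPolynomial.mem_support_iff, hcoeff]
      exact mul_ne_zero (MvPolynomial.mem_support_iff.mp (Finset.mem_coe.mp ha₀))
        (MvPolynomial.mem_support_iff.mp (Finset.mem_coe.mp hb₀))
    rw [← hab, ← fadd, hC]
    exact subset_convexHull ℝ _ ⟨a₀ + b₀, Finset.mem_coe.mpr hmem, rfl⟩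
  -- Krein-Milman for the finite-dimensional compact convex set A + B
  have hfin : (f '' ↑P.support + f '' ↑Q.support).Finite :=
    Set.Finite.add (P.support.finite_toSet.image f) (Q.support.finite_toSet.image f)
  have hcomp : IsCompact (A + B) := by
    rw [hABsum]; exact hfin.isCompact_convexHull ℝ
  have hconv : Convex ℝ (A + B) := (convex_convexHull ℝ _).add (convex_convexHull ℝ _)
  have hepfin : ((A + B).extremePoints ℝ).Finite := by
    apply hfin.subset
    rw [hABsum]
    exact extremePoints_convexHull_subset
  have hclosed : IsClosed (convexHull ℝ ((A + B).extremePoints ℝ)) :=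
    (hepfin.isCompact_convexHull ℝ).isClosed
  have hKM : convexHull ℝ ((A + B).extremePoints ℝ) = A + B := by
    have h3 := closure_convexHull_extremePoints hcomp hconv
    rw [hclosed.closure_eq] at h3
    exact h3
  have h2 : A + B ⊆ C := by
    rw [← hKM]
    exact convexHull_min hep (convex_convexHull ℝ _)
  exact le_antisymm h1 h2
end

section
/- Let P, Q be nonzero multivariate polynomials over a field, and let v be a vertex (extreme point) of the convex hull of I(P) + I(Q). Then v ∈ I(PQ); in fact, if v = i + j is the unique decomposition with i ∈ conv(I(P)), j ∈ conv(I(Q)), then the coefficient of X^v in PQ equals the product of the coefficients of X^i in P and X^j in Q, which is nonzero. -/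
open Pointwise

theorem stmt9 {K : Type*} [Field K] (n : ℕ) (P Q : MvPolynomial (Fin n) K)
    (hP : P ≠ 0) (hQ : Q ≠ 0) (v : Fin n →₀ ℕ)
    (hv : (fun t => (v t : ℝ)) ∈ Set.extremePoints ℝ
      (convexHull ℝ ((fun d : Fin n →₀ ℕ => fun t => (d t : ℝ)) '' ↑(P.support + Q.support)))) :
    v ∈ (P * Q).support ∧
    ∃ i ∈ P.support, ∃ j ∈ Q.support, i + j = v ∧
      (P * Q).coeff v = P.coeff i * Q.coeff j ∧ P.coeff i * Q.coeff j ≠ 0 := by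
  classical
  set e : (Fin n →₀ ℕ) → (Fin n → ℝ) := fun d => fun t => (d t : ℝ) with he
  have einj : Function.Injective e := by
    intro a b hab
    ext t
    have := congrFun hab t
    simp only [e] at this
    exact_mod_cast this
  -- extreme point is in the set
  have hmem : e v ∈ e '' ↑(P.support + Q.support) :=
    extremePoints_convexHull_subset hv
  obtain ⟨w, hw, hwe⟩ := hmem
  have hvw : w = v := einj hwe
  rw [hvw] at hw
  rw [Finset.mem_coe, Finset.mem_add] at hw
  obtain ⟨i, hi, j, hj, hij⟩ := hw
  -- uniqueness of decomposition
  have huniq : ∀ i' ∈ P.support, ∀ j' ∈ Q.support, i' + j' = v → i' = i ∧ j' = j := by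
    intro i' hi' j' hj' hij'
    have h1 : e (i + j') ∈ convexHull ℝ (e '' ↑(P.support + Q.support)) := by
      apply subset_convexHull
      exact Set.mem_image_of_mem _ (Finset.add_mem_add hi hj')
    have h2 : e (i' + j) ∈ convexHull ℝ (e '' ↑(P.support + Q.support)) := by
      apply subset_convexHull
      exact Set.mem_image_of_mem _ (Finset.add_mem_add hi' hj)
    have hseg : e v ∈ openSegment ℝ (e (i + j')) (e (i' + j)) := by
      refine ⟨1/2, 1/2, by norm_num, by norm_num, by norm_num, ?_⟩
      funext t
      have hvt : (i t : ℝ) + j t = v t := by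
        have := congrFun (congrArg e hij) t
        simpa [e] using this
      have hvt' : (i' t : ℝ) + j' t = v t := by
        have := congrFun (congrArg e hij') t
        simpa [e] using this
      simp only [e, Pi.add_apply, Pi.smul_apply, smul_eq_mul, Finsupp.add_apply]
      push_cast
      linarith
    have := hv.2 h1 h2 hseg
    have e1 : i + j' = v := einj this
    have e2 : i' + j = v := einj (hv.2 h2 h1 (by rw [openSegment_symm]; exact hseg))
    constructor
    · have : i' + j = i + j := by rw [e2, ← hij]
      exact add_right_cancel this
    · have : i + j' = i + j := by rw [e1, ← hij]
      exact add_left_cancel this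
  have hPi : P.coeff i ≠ 0 := MvPolynomial.mem_support_iff.mp hi
  have hQj : Q.coeff j ≠ 0 := MvPolynomial.mem_support_iff.mp hj
  have hcoeff : (P * Q).coeff v = P.coeff i * Q.coeff j := by
    rw [MvPolynomial.coeff_mul]
    rw [Finset.sum_eq_single (i, j)]
    · intro b hb hbne
      by_contra hne
      have hb1 : b.1 ∈ P.support := MvPolynomial.mem_support_iff.mpr fun h => hne (by simp [h])
      have hb2 : b.2 ∈ Q.support := MvPolynomial.mem_support_iff.mpr fun h => hne (by simp [h])
      have hsum : b.1 + b.2 = v := (Finset.HasAntidiagonal.mem_antidiagonal.mp hb)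
      obtain ⟨h1, h2⟩ := huniq _ hb1 _ hb2 hsum
      exact hbne (Prod.ext h1 h2)
    · intro h
      exact absurd (Finset.HasAntidiagonal.mem_antidiagonal.mpr hij) h
  have hne : P.coeff i * Q.coeff j ≠ 0 := mul_ne_zero hPi hQj
  refine ⟨MvPolynomial.mem_support_iff.mpr (by rw [hcoeff]; exact hne), i, hi, j, hj, hij, hcoeff, hne⟩
end

section
/- Let K be an algebraically closed field, I', I'' ⊆ ℕⁿ finite nonempty sets, and I ⊆ I' + I''. Then the set of products {QR : Q, R ∈ K[X], I(Q) ⊆ I', I(R) ⊆ I'', Q ≠ 0, R ≠ 0} is Zariski-closed in the space W_I'+I'' := {P ≠ 0 : I(P) ⊆ I' + I''} ≅ 𝔸^{|I'+I''|} \ {0}. -/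
open Pointwise MvPolynomial

namespace Stmt13

section LinAlg
open Matrix

variable {K : Type*} [Field K] {τ ι : Type*} [Fintype τ] [Fintype ι] [DecidableEq τ]

omit [Fintype ι] in
lemma det_eq_zero_of_left_kernel (M : Matrix τ τ K) (w : τ → K) (hw : w ≠ 0)
    (h : Matrix.vecMul w M = 0) : M.det = 0 := by
  by_contra hd
  have hu : IsUnit M.det := isUnit_iff_ne_zero.2 hd
  have : w = 0 := by
    have h1 : Matrix.vecMul (Matrix.vecMul w M) M⁻¹ = 0 := by rw [h, Matrix.zero_vecMul]
    rwa [Matrix.vecMul_vecMul, Matrix.mul_nonsing_inv _ hu, Matrix.vecMul_one] at h1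
  exact hw this

omit [Fintype ι] in
lemma span_cols_eq_top_of_minor (D : Matrix τ ι K) (σ : τ ↪ ι)
    (hd : (D.submatrix id σ).det ≠ 0) :
    Submodule.span K (Set.range fun i => fun t => D t i) = ⊤ := by
  set M : Matrix τ τ K := D.submatrix id σ with hM
  have hu : IsUnit M.det := isUnit_iff_ne_zero.2 hd
  have hsurj : Function.Surjective M.mulVecLin := by
    intro x
    refine ⟨M⁻¹.mulVec x, ?_⟩
    simp [Matrix.mulVecLin_apply, Matrix.mulVec_mulVec, Matrix.mul_nonsing_inv _ hu]
  have hr : Submodule.span K (Set.range Mᵀ) = ⊤ := by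
    rw [show Set.range Mᵀ = Set.range M.col from rfl, ← Matrix.range_mulVecLin, LinearMap.range_eq_top.2 hsurj]
  rw [eq_top_iff, ← hr]
  apply Submodule.span_le.2
  rintro x ⟨t', rfl⟩
  exact Submodule.subset_span ⟨σ t', rfl⟩

lemma exists_minor_of_span_cols_eq_top (D : Matrix τ ι K)
    (h : Submodule.span K (Set.range fun i => fun t => D t i) = ⊤) :
    ∃ σ : τ ↪ ι, (D.submatrix id σ).det ≠ 0 := by
  classical
  set u : ι → (τ → K) := fun i => fun t => D t i with hu
  obtain ⟨s, hsub, hspan, hli⟩ := exists_linearIndependent K (Set.range u)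
  rw [h] at hspan
  have hfin : s.Finite := (Set.finite_range u).subset hsub
  haveI : Fintype s := hfin.fintype
  let b : Module.Basis s K (τ → K) := Module.Basis.mk hli (by rw [Subtype.range_coe]; exact hspan.ge)
  have hcard : Fintype.card s = Fintype.card τ := by
    have h1 : Fintype.card s = Module.finrank K (τ → K) :=
      (Module.finrank_eq_card_basis b).symm
    rw [h1, Module.finrank_pi]
  let e : τ ≃ s := (Fintype.equivOfCardEq hcard).symm
  have hchoose : ∀ x : s, ∃ i : ι, u i = (x : τ → K) := fun x => hsub x.2
  choose g hg using hchoose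
  have hginj : Function.Injective g := by
    intro x y hxy
    have : (x : τ → K) = (y : τ → K) := by rw [← hg x, ← hg y, hxy]
    exact Subtype.ext this
  refine ⟨⟨g ∘ e, hginj.comp e.injective⟩, ?_⟩
  have hMb : D.submatrix id (g ∘ e) = (Pi.basisFun K τ).toMatrix (fun t => (b.reindex e.symm) t) := by
    ext t t'
    simp only [Matrix.submatrix_apply, Module.Basis.toMatrix_apply, Pi.basisFun_repr, Module.Basis.reindex_apply,
      Equiv.symm_symm, id]
    rw [Module.Basis.mk_apply, ← hg (e t')]
    rfl
  intro hdet
  have : Invertible ((Pi.basisFun K τ).toMatrix (fun t => (b.reindex e.symm) t)) :=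
    (Pi.basisFun K τ).invertibleToMatrix (b.reindex e.symm)
  have := Matrix.isUnit_det_of_invertible ((Pi.basisFun K τ).toMatrix (fun t => (b.reindex e.symm) t))
  rw [← hMb] at this
  simp only [Function.Embedding.coeFn_mk] at hdet
  rw [hdet] at this
  exact (not_isUnit_zero : ¬ IsUnit (0:K)) this

end LinAlg

section Defs
variable {n : ℕ} (K : Type*) [CommRing K] (I' I'' : Finset (Fin n →₀ ℕ))

abbrev Vt := {k // k ∈ I'} ⊕ {k // k ∈ I''}

noncomputable def Qof (q : {k // k ∈ I'} → K) : MvPolynomial (Fin n) K :=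
  ∑ a ∈ I'.attach, monomial a.1 (q a)

lemma coeff_Qof (q : {k // k ∈ I'} → K) (t : Fin n →₀ ℕ) :
    coeff t (Qof K I' q) = if h : t ∈ I' then q ⟨t, h⟩ else 0 := by
  classical
  rw [Qof, coeff_sum]
  simp_rw [coeff_monomial]
  split
  · next h =>
    rw [Finset.sum_eq_single (⟨t, h⟩ : {k // k ∈ I'})]
    · simp
    · intro b _ hb
      simp only [ite_eq_right_iff]
      intro hbt
      exact absurd (Subtype.ext hbt) hb
    · intro h2
      exact absurd (Finset.mem_attach _ _) h2
  · next h =>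
    apply Finset.sum_eq_zero
    intro a _
    simp only [ite_eq_right_iff]
    intro hat
    exact absurd (hat ▸ a.2) h
  
lemma support_Qof (q : {k // k ∈ I'} → K) : (Qof K I' q).support ⊆ I' := by
  intro t ht
  rw [mem_support_iff, coeff_Qof] at ht
  split at ht
  · next h => exact h
  · exact absurd rfl ht

lemma Qof_eq_self (Q : MvPolynomial (Fin n) K) (hQ : Q.support ⊆ I') :
    Qof K I' (fun a => coeff a.1 Q) = Q := by
  apply MvPolynomial.ext
  intro t
  rw [coeff_Qof]
  split
  · rfl
  · next h =>
    by_contra hc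
    exact h (hQ (mem_support_iff.2 (fun h0 => hc h0.symm)))

lemma Qof_smul (l : K) (q : {k // k ∈ I'} → K) :
    Qof K I' (l • q) = C l * Qof K I' q := by
  rw [Qof, Qof, Finset.mul_sum]
  apply Finset.sum_congr rfl
  intro a _
  rw [C_mul_monomial]
  rfl

lemma Qof_ne_zero (q : {k // k ∈ I'} → K) (hq : q ≠ 0) : Qof K I' q ≠ 0 := by
  obtain ⟨a, ha⟩ := Function.ne_iff.1 hq
  intro h
  apply ha
  have := coeff_Qof K I' q a.1
  rw [h] at this
  simp only [coeff_zero] at this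
  rw [dif_pos a.2] at this
  simpa using this.symm


noncomputable def Pof (c : {k // k ∈ I' + I''} → K) : MvPolynomial (Fin n) K :=
  ∑ k ∈ (I' + I'').attach, monomial (k : Fin n →₀ ℕ) (c k)

lemma Pof_eq (c : {k // k ∈ I' + I''} → K) : Pof K I' I'' c = Qof K (I' + I'') c := rfl

noncomputable def mcoef (k : Fin n →₀ ℕ) : MvPolynomial (Vt I' I'') K :=
  ∑ a ∈ I'.attach, ∑ b ∈ I''.attach,
    if a.1 + b.1 = k then X (Sum.inl a) * X (Sum.inr b) else 0

lemma eval_mcoef (q : {k // k ∈ I'} → K) (r : {k // k ∈ I''} → K) (k : Fin n →₀ ℕ) :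
    eval (Sum.elim q r) (mcoef K I' I'' k) = coeff k (Qof K I' q * Qof K I'' r) := by
  classical
  have hprod : Qof K I' q * Qof K I'' r
      = ∑ a ∈ I'.attach, ∑ b ∈ I''.attach, monomial (a.1 + b.1) (q a * r b) := by
    rw [Qof, Qof, Finset.sum_mul_sum]
    apply Finset.sum_congr rfl; intro a _
    apply Finset.sum_congr rfl; intro b _
    rw [monomial_mul]
  rw [hprod, mcoef]
  rw [map_sum, coeff_sum]
  apply Finset.sum_congr rfl; intro a _
  rw [map_sum, coeff_sum]
  apply Finset.sum_congr rfl; intro b _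
  rw [coeff_monomial, apply_ite (eval (Sum.elim q r))]
  simp


def dA (t : Vt I' I'' →₀ ℕ) : ℕ := ∑ a ∈ I'.attach, t (Sum.inl a)
def dB (t : Vt I' I'' →₀ ℕ) : ℕ := ∑ b ∈ I''.attach, t (Sum.inr b)

lemma dA_add (t s : Vt I' I'' →₀ ℕ) : dA I' I'' (t + s) = dA I' I'' t + dA I' I'' s := by
  simp [dA, Finsupp.add_apply, Finset.sum_add_distrib]

lemma dB_add (t s : Vt I' I'' →₀ ℕ) : dB I' I'' (t + s) = dB I' I'' t + dB I' I'' s := by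
  simp [dB, Finsupp.add_apply, Finset.sum_add_distrib]

lemma dA_single_inl (a : {k // k ∈ I'}) (m : ℕ) :
    dA I' I'' (Finsupp.single (Sum.inl a) m) = m := by
  classical
  rw [dA, Finset.sum_eq_single a]
  · simp
  · intro b _ hb
    rw [Finsupp.single_apply, if_neg (by simp [hb.symm])]
  · intro h; exact absurd (Finset.mem_attach _ _) h

lemma dA_single_inr (b : {k // k ∈ I''}) (m : ℕ) :
    dA I' I'' (Finsupp.single (Sum.inr b) m) = 0 := by
  classical
  apply Finset.sum_eq_zero
  intro a _
  rw [Finsupp.single_apply, if_neg (by simp)]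

lemma dB_single_inr (b : {k // k ∈ I''}) (m : ℕ) :
    dB I' I'' (Finsupp.single (Sum.inr b) m) = m := by
  classical
  rw [dB, Finset.sum_eq_single b]
  · simp
  · intro a _ ha
    rw [Finsupp.single_apply, if_neg (by simp [ha.symm])]
  · intro h; exact absurd (Finset.mem_attach _ _) h

lemma dB_single_inl (a : {k // k ∈ I'}) (m : ℕ) :
    dB I' I'' (Finsupp.single (Sum.inl a) m) = 0 := by
  classical
  apply Finset.sum_eq_zero
  intro b _
  rw [Finsupp.single_apply, if_neg (by simp)]

def Bihom (d e : ℕ) (x : MvPolynomial (Vt I' I'') K) : Prop :=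
  ∀ t, coeff t x ≠ 0 → dA I' I'' t = d ∧ dB I' I'' t = e

lemma Bihom.mul {d e d' e' : ℕ} {x y : MvPolynomial (Vt I' I'') K}
    (hx : Bihom K I' I'' d e x) (hy : Bihom K I' I'' d' e' y) :
    Bihom K I' I'' (d + d') (e + e') (x * y) := by
  intro t ht
  rw [coeff_mul] at ht
  obtain ⟨p, hp, hne⟩ := Finset.exists_ne_zero_of_sum_ne_zero ht
  rw [Finset.HasAntidiagonal.mem_antidiagonal] at hp
  have h1 := hx p.1 (left_ne_zero_of_mul hne)
  have h2 := hy p.2 (right_ne_zero_of_mul hne)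
  rw [← hp, dA_add, dB_add, h1.1, h1.2, h2.1, h2.2]
  exact ⟨rfl, rfl⟩

lemma Bihom_monomial (t : Vt I' I'' →₀ ℕ) (a : K) :
    Bihom K I' I'' (dA I' I'' t) (dB I' I'' t) (monomial t a) := by
  intro s hs
  rw [coeff_monomial] at hs
  split at hs
  · next h => rw [← h]; exact ⟨rfl, rfl⟩
  · exact absurd rfl hs

lemma Bihom_mcoef (k : Fin n →₀ ℕ) : Bihom K I' I'' 1 1 (mcoef K I' I'' k) := by
  classical
  intro t ht
  rw [mcoef, coeff_sum] at ht
  obtain ⟨a, _, ha⟩ := Finset.exists_ne_zero_of_sum_ne_zero ht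
  rw [coeff_sum] at ha
  obtain ⟨b, _, hb⟩ := Finset.exists_ne_zero_of_sum_ne_zero ha
  have hXX : (X (Sum.inl a) * X (Sum.inr b) : MvPolynomial (Vt I' I'') K)
      = monomial (Finsupp.single (Sum.inl a) 1 + Finsupp.single (Sum.inr b) 1) 1 := by
    rw [X, X, monomial_mul, mul_one]
  split at hb
  · rw [hXX, coeff_monomial] at hb
    split at hb
    · next h =>
      rw [← h]
      constructor
      · rw [dA_add, dA_single_inl, dA_single_inr]
      · rw [dB_add, dB_single_inl, dB_single_inr]
    · exact absurd rfl hb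
  · simp at hb


noncomputable def fgen (c : {k // k ∈ I' + I''} → K)
    (p : {k // k ∈ I' + I''} × {k // k ∈ I' + I''}) : MvPolynomial (Vt I' I'') K :=
  C (c p.2) * mcoef K I' I'' p.1.1 - C (c p.1) * mcoef K I' I'' p.2.1

lemma Bihom_fgen (c : {k // k ∈ I' + I''} → K) (p) :
    Bihom K I' I'' 1 1 (fgen K I' I'' c p) := by
  intro t ht
  rw [fgen, coeff_sub, coeff_C_mul, coeff_C_mul] at ht
  by_cases h1 : coeff t (mcoef K I' I'' p.1.1) = 0
  · rw [h1, mul_zero, zero_sub, neg_ne_zero] at ht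
    exact Bihom_mcoef K I' I'' p.2.1 t (right_ne_zero_of_mul ht)
  · exact Bihom_mcoef K I' I'' p.1.1 t h1

lemma eval_fgen (q : {k // k ∈ I'} → K) (r : {k // k ∈ I''} → K)
    (c : {k // k ∈ I' + I''} → K) (p) :
    eval (Sum.elim q r) (fgen K I' I'' c p)
      = c p.2 * coeff p.1.1 (Qof K I' q * Qof K I'' r)
        - c p.1 * coeff p.2.1 (Qof K I' q * Qof K I'' r) := by
  rw [fgen, map_sub, map_mul, map_mul, eval_C, eval_C, eval_mcoef, eval_mcoef]


noncomputable def TT (N : ℕ) : Finset (Vt I' I'' →₀ ℕ) := by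
  classical
  exact ((Fintype.piFinset (fun _ : Vt I' I'' => Finset.range (N+1))).map
    (Finsupp.equivFunOnFinite.symm.toEmbedding)).filter
    (fun t => dA I' I'' t = N ∧ dB I' I'' t = N)

lemma mem_TT {N : ℕ} {t : Vt I' I'' →₀ ℕ} :
    t ∈ TT I' I'' N ↔ (dA I' I'' t = N ∧ dB I' I'' t = N) := by
  classical
  constructor
  · intro h
    rw [TT] at h
    exact (Finset.mem_filter.1 h).2
  · intro h
    rw [TT, Finset.mem_filter]
    refine ⟨?_, h⟩
    rw [Finset.mem_map]
    refine ⟨⇑t, ?_, by simp⟩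
    rw [Fintype.mem_piFinset]
    intro v
    rw [Finset.mem_range, Nat.lt_succ_iff]
    cases v with
    | inl a =>
      calc t (Sum.inl a) ≤ dA I' I'' t := by
            rw [dA]
            exact Finset.single_le_sum (f := fun a => t (Sum.inl a))
              (fun b _ => Nat.zero_le _) (Finset.mem_attach _ a)
      _ = N := h.1
    | inr b =>
      calc t (Sum.inr b) ≤ dB I' I'' t := by
            rw [dB]
            exact Finset.single_le_sum (f := fun b => t (Sum.inr b))
              (fun b _ => Nat.zero_le _) (Finset.mem_attach _ b)
      _ = N := h.2


noncomputable def Ent (N : ℕ) (t : {t // t ∈ TT I' I'' N})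
    (s : {t // t ∈ TT I' I'' (N-1)} × ({k // k ∈ I' + I''} × {k // k ∈ I' + I''})) :
    MvPolynomial {k // k ∈ I' + I''} K :=
  X s.2.2 * C (coeff t.1 (monomial s.1.1 1 * mcoef K I' I'' s.2.1.1))
  - X s.2.1 * C (coeff t.1 (monomial s.1.1 1 * mcoef K I' I'' s.2.2.1))

lemma eval_Ent (c : {k // k ∈ I' + I''} → K) (N : ℕ) (t) (s) :
    eval c (Ent K I' I'' N t s) = coeff t.1 (monomial s.1.1 1 * fgen K I' I'' c s.2) := by
  have h : monomial s.1.1 (1:K) * fgen K I' I'' c s.2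
      = C (c s.2.2) * (monomial s.1.1 1 * mcoef K I' I'' s.2.1.1)
        - C (c s.2.1) * (monomial s.1.1 1 * mcoef K I' I'' s.2.2.1) := by
    rw [fgen]; ring
  rw [h, coeff_sub, coeff_C_mul, coeff_C_mul, Ent]
  simp

open scoped Classical in
noncomputable def SSet : Set (MvPolynomial {k // k ∈ I' + I''} K) :=
  {g | ∃ N : ℕ, 1 ≤ N ∧ ∃ σ : {t // t ∈ TT I' I'' N} ↪
      ({t // t ∈ TT I' I'' (N-1)} × ({k // k ∈ I' + I''} × {k // k ∈ I' + I''})),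
    g = Matrix.det ((Matrix.of (Ent K I' I'' N)).submatrix id σ)}

end Defs

section Eq1
variable {n : ℕ} (K : Type*) [Field K] (I' I'' : Finset (Fin n →₀ ℕ))

lemma support_QofQof (q : {k // k ∈ I'} → K) (r : {k // k ∈ I''} → K) :
    (Qof K I' q * Qof K I'' r).support ⊆ I' + I'' := by
  refine (MvPolynomial.support_mul _ _).trans ?_
  exact Finset.add_subset_add (support_Qof K I' q) (support_Qof K I'' r)

lemma factor_iff_zero (c : {k // k ∈ I' + I''} → K) (hc : ∃ k, c k ≠ 0) :
    (∃ Q R : MvPolynomial (Fin n) K, Q ≠ 0 ∧ R ≠ 0 ∧ Q.support ⊆ I' ∧ R.support ⊆ I'' ∧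
      Q * R = Pof K I' I'' c)
    ↔ ∃ (q : {k // k ∈ I'} → K) (r : {k // k ∈ I''} → K), q ≠ 0 ∧ r ≠ 0 ∧
        ∀ p, eval (Sum.elim q r) (fgen K I' I'' c p) = 0 := by
  constructor
  · rintro ⟨Q, R, hQ, hR, hQs, hRs, hQR⟩
    refine ⟨fun a => coeff a.1 Q, fun b => coeff b.1 R, ?_, ?_, ?_⟩
    · intro h0
      apply hQ
      rw [← Qof_eq_self K I' Q hQs, h0]
      simp [Qof]
    · intro h0
      apply hR
      rw [← Qof_eq_self K I'' R hRs, h0]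
      simp [Qof]
    · intro p
      rw [eval_fgen, Qof_eq_self K I' Q hQs, Qof_eq_self K I'' R hRs, hQR]
      have hco : ∀ k : {k // k ∈ I' + I''}, coeff k.1 (Pof K I' I'' c) = c k := by
        intro k
        rw [Pof_eq, coeff_Qof, dif_pos k.2]
      rw [hco, hco]
      ring
  · rintro ⟨q, r, hq, hr, hz⟩
    set QR := Qof K I' q * Qof K I'' r with hQR
    set mk : {k // k ∈ I' + I''} → K := fun k => coeff k.1 QR with hmk
    have hrel : ∀ i j, c j * mk i = c i * mk j := by
      intro i j
      have := hz (i, j)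
      rw [eval_fgen] at this
      exact sub_eq_zero.1 this
    have hQRne : QR ≠ 0 := mul_ne_zero (Qof_ne_zero K I' q hq) (Qof_ne_zero K I'' r hr)
    obtain ⟨k0, hk0⟩ := MvPolynomial.ne_zero_iff.1 hQRne
    have hk0m : k0 ∈ I' + I'' := support_QofQof K I' I'' q r (mem_support_iff.2 hk0)
    set i0 : {k // k ∈ I' + I''} := ⟨k0, hk0m⟩ with hi0
    have hmki0 : mk i0 ≠ 0 := hk0
    obtain ⟨j0, hj0⟩ := hc
    have hci0 : c i0 ≠ 0 := by
      intro h
      apply mul_ne_zero hj0 hmki0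
      rw [hrel i0 j0, h, zero_mul]
    set l : K := mk i0 / c i0 with hl
    have hlne : l ≠ 0 := div_ne_zero hmki0 hci0
    have hmkk : ∀ k, mk k = l * c k := by
      intro k
      have := hrel k i0
      rw [hl, div_mul_eq_mul_div, eq_div_iff hci0]
      linear_combination this
    refine ⟨Qof K I' (l⁻¹ • q), Qof K I'' r, ?_, Qof_ne_zero K I'' r hr, support_Qof _ _ _,
      support_Qof _ _ _, ?_⟩
    · exact Qof_ne_zero K I' _ (smul_ne_zero (inv_ne_zero hlne) hq)
    · rw [Qof_smul]
      apply MvPolynomial.ext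
      intro t
      rw [mul_assoc, ← hQR, coeff_C_mul, Pof_eq, coeff_Qof]
      split
      · next h =>
        have := hmkk ⟨t, h⟩
        rw [hmk] at this
        simp only at this
        rw [this]
        field_simp
      · next h =>
        have : coeff t QR = 0 := by
          by_contra hco
          exact h (support_QofQof K I' I'' q r (mem_support_iff.2 hco))
        rw [this, mul_zero]

end Eq1

section Graded
variable {n : ℕ} (K : Type*) [Field K] (I' I'' : Finset (Fin n →₀ ℕ))

open scoped Classical in
noncomputable def trunc (d e : ℕ) (g : MvPolynomial (Vt I' I'') K) :
    MvPolynomial (Vt I' I'') K :=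
  ∑ t ∈ g.support.filter (fun t => dA I' I'' t = d ∧ dB I' I'' t = e), monomial t (coeff t g)

lemma coeff_trunc (d e : ℕ) (g : MvPolynomial (Vt I' I'') K) (t : Vt I' I'' →₀ ℕ) :
    coeff t (trunc K I' I'' d e g)
      = if dA I' I'' t = d ∧ dB I' I'' t = e then coeff t g else 0 := by
  classical
  rw [trunc, coeff_sum]
  simp_rw [coeff_monomial]
  rw [Finset.sum_ite_eq' (g.support.filter (fun t => dA I' I'' t = d ∧ dB I' I'' t = e)) t
    (fun t' => coeff t' g)]
  by_cases hP : dA I' I'' t = d ∧ dB I' I'' t = e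
  · rw [if_pos hP]
    by_cases h0 : coeff t g = 0
    · simp [h0]
    · rw [if_pos (Finset.mem_filter.2 ⟨mem_support_iff.2 h0, hP⟩)]
  · have hnm : t ∉ g.support.filter (fun t => dA I' I'' t = d ∧ dB I' I'' t = e) :=
      fun hmem => hP (Finset.mem_filter.1 hmem).2
    rw [if_neg hP, if_neg hnm]

lemma coeff_trunc_mul_of {N : ℕ} (hN : 1 ≤ N) (g f : MvPolynomial (Vt I' I'') K)
    (hf : Bihom K I' I'' 1 1 f) (t : Vt I' I'' →₀ ℕ) (ht : dA I' I'' t = N ∧ dB I' I'' t = N) :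
    coeff t (trunc K I' I'' (N-1) (N-1) g * f) = coeff t (g * f) := by
  rw [coeff_mul, coeff_mul]
  apply Finset.sum_congr rfl
  rintro ⟨u, v⟩ hp
  rw [Finset.HasAntidiagonal.mem_antidiagonal] at hp
  by_cases hv : coeff v f = 0
  · simp only [hv, mul_zero]
  · obtain ⟨hv1, hv2⟩ := hf v hv
    have hdt : dA I' I'' u + dA I' I'' v = dA I' I'' t := by rw [← hp, dA_add]
    have hdt2 : dB I' I'' u + dB I' I'' v = dB I' I'' t := by rw [← hp, dB_add]
    have hu1 : dA I' I'' u = N - 1 := by omega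
    have hu2 : dB I' I'' u = N - 1 := by omega
    rw [coeff_trunc, if_pos ⟨hu1, hu2⟩]

lemma coeff_trunc_mul_ne {N : ℕ} (hN : 1 ≤ N) (g f : MvPolynomial (Vt I' I'') K)
    (hf : Bihom K I' I'' 1 1 f) (t : Vt I' I'' →₀ ℕ)
    (ht : ¬(dA I' I'' t = N ∧ dB I' I'' t = N)) :
    coeff t (trunc K I' I'' (N-1) (N-1) g * f) = 0 := by
  rw [coeff_mul]
  apply Finset.sum_eq_zero
  rintro ⟨u, v⟩ hp
  rw [Finset.HasAntidiagonal.mem_antidiagonal] at hp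
  by_cases hv : coeff v f = 0
  · simp only [hv, mul_zero]
  · obtain ⟨hv1, hv2⟩ := hf v hv
    have hdt : dA I' I'' u + dA I' I'' v = dA I' I'' t := by rw [← hp, dA_add]
    have hdt2 : dB I' I'' u + dB I' I'' v = dB I' I'' t := by rw [← hp, dB_add]
    have hcond : ¬(dA I' I'' u = N - 1 ∧ dB I' I'' u = N - 1) := by
      rintro ⟨hu1, hu2⟩
      exact ht ⟨by omega, by omega⟩
    rw [coeff_trunc, if_neg hcond, zero_mul]

lemma mem_span_shifts {N : ℕ} (hN : 1 ≤ N) (c : {k // k ∈ I' + I''} → K)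
    (x : MvPolynomial (Vt I' I'') K) (hx : Bihom K I' I'' N N x)
    (hmem : x ∈ Ideal.span (Set.range (fgen K I' I'' c))) :
    x ∈ Submodule.span K (Set.range
      (fun s : {t // t ∈ TT I' I'' (N-1)} × ({k // k ∈ I' + I''} × {k // k ∈ I' + I''}) =>
        monomial s.1.1 (1:K) * fgen K I' I'' c s.2)) := by
  classical
  rw [Ideal.span, Submodule.mem_span_range_iff_exists_fun] at hmem
  obtain ⟨g, hg⟩ := hmem
  simp_rw [smul_eq_mul] at hg
  set h : ({k // k ∈ I' + I''} × {k // k ∈ I' + I''}) → MvPolynomial (Vt I' I'') K :=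
    fun p => trunc K I' I'' (N-1) (N-1) (g p) with hh
  have hxh : x = ∑ p, h p * fgen K I' I'' c p := by
    apply MvPolynomial.ext
    intro t
    rw [coeff_sum]
    by_cases hdt : dA I' I'' t = N ∧ dB I' I'' t = N
    · have : ∀ p ∈ (Finset.univ : Finset ({k // k ∈ I' + I''} × {k // k ∈ I' + I''})),
          coeff t (h p * fgen K I' I'' c p) = coeff t (g p * fgen K I' I'' c p) := by
        intro p _
        exact coeff_trunc_mul_of K I' I'' hN (g p) _ (Bihom_fgen K I' I'' c p) t hdt
      rw [Finset.sum_congr rfl this, ← coeff_sum, hg]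
    · have : ∀ p ∈ (Finset.univ : Finset ({k // k ∈ I' + I''} × {k // k ∈ I' + I''})),
          coeff t (h p * fgen K I' I'' c p) = 0 := by
        intro p _
        exact coeff_trunc_mul_ne K I' I'' hN (g p) _ (Bihom_fgen K I' I'' c p) t hdt
      rw [Finset.sum_congr rfl this, Finset.sum_const_zero]
      by_contra hco
      exact hdt (hx t hco)
  rw [hxh]
  apply Submodule.sum_mem
  intro p _
  have hsupp : ∀ μ ∈ (h p).support, μ ∈ TT I' I'' (N-1) := by
    intro μ hμ
    rw [mem_support_iff, hh] at hμ
    simp only at hμ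
    rw [coeff_trunc] at hμ
    rw [mem_TT]
    by_contra hco
    rw [if_neg hco] at hμ
    exact hμ rfl
  rw [(h p).as_sum, Finset.sum_mul]
  apply Submodule.sum_mem
  intro μ hμ
  have : (monomial μ (coeff μ (h p)) : MvPolynomial (Vt I' I'') K) * fgen K I' I'' c p
      = coeff μ (h p) • (monomial μ (1:K) * fgen K I' I'' c p) := by
    rw [smul_eq_C_mul, ← mul_assoc, C_mul_monomial, mul_one]
  rw [this]
  exact Submodule.smul_mem _ _ (Submodule.subset_span ⟨(⟨μ, hsupp μ hμ⟩, p), rfl⟩)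

end Graded

section DirA
variable {n : ℕ} (K : Type*) [Field K] (I' I'' : Finset (Fin n →₀ ℕ))

lemma Bihom_shift {N : ℕ} (hN : 1 ≤ N) (c : {k // k ∈ I' + I''} → K)
    (s : {t // t ∈ TT I' I'' (N-1)} × ({k // k ∈ I' + I''} × {k // k ∈ I' + I''})) :
    Bihom K I' I'' N N (monomial s.1.1 (1:K) * fgen K I' I'' c s.2) := by
  obtain ⟨h1, h2⟩ := (mem_TT I' I'').1 s.1.2
  have := Bihom.mul K I' I'' (Bihom_monomial K I' I'' s.1.1 (1:K)) (Bihom_fgen K I' I'' c s.2)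
  rwa [h1, h2, Nat.sub_add_cancel hN] at this

lemma eval_eq_sum_TT {N : ℕ} (x : MvPolynomial (Vt I' I'') K)
    (hx : Bihom K I' I'' N N x) (z : Vt I' I'' → K) :
    eval z x = ∑ t ∈ (TT I' I'' N).attach, coeff t.1 x * eval z (monomial t.1 (1:K)) := by
  classical
  have hsup : x.support ⊆ TT I' I'' N := by
    intro t ht
    exact (mem_TT I' I'').2 (hx t (mem_support_iff.1 ht))
  rw [Finset.sum_attach (TT I' I'' N) (fun t => coeff t x * eval z (monomial t (1:K)))]
  rw [← Finset.sum_subset hsup (by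
    intro t _ hts
    rw [MvPolynomial.notMem_support_iff.1 hts, zero_mul])]
  rw [eval_eq]
  apply Finset.sum_congr rfl
  intro t _
  rw [eval_monomial, one_mul]
  rfl

lemma minors_vanish (c : {k // k ∈ I' + I''} → K) (q : {k // k ∈ I'} → K)
    (r : {k // k ∈ I''} → K) (hq : q ≠ 0) (hr : r ≠ 0)
    (hz : ∀ p, eval (Sum.elim q r) (fgen K I' I'' c p) = 0) :
    ∀ g ∈ SSet K I' I'', eval c g = 0 := by
  classical
  rintro g ⟨N, hN, σ, rfl⟩
  rw [RingHom.map_det]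
  set D := (((Matrix.of (Ent K I' I'' N)).submatrix id σ).map (eval c)) with hD
  set w : {t // t ∈ TT I' I'' N} → K := fun t => eval (Sum.elim q r) (monomial t.1 (1:K)) with hw
  apply det_eq_zero_of_left_kernel D w
  · -- w ≠ 0
    obtain ⟨a, ha⟩ := Function.ne_iff.1 hq
    obtain ⟨b, hb⟩ := Function.ne_iff.1 hr
    set t0 : Vt I' I'' →₀ ℕ :=
      Finsupp.single (Sum.inl a) N + Finsupp.single (Sum.inr b) N with ht0
    have hmem : t0 ∈ TT I' I'' N := by
      rw [mem_TT]
      constructor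
      · rw [dA_add, dA_single_inl, dA_single_inr, add_zero]
      · rw [dB_add, dB_single_inl, dB_single_inr, zero_add]
    have hmono : (monomial t0 (1:K) : MvPolynomial (Vt I' I'') K)
        = X (Sum.inl a) ^ N * X (Sum.inr b) ^ N := by
      rw [X_pow_eq_monomial, X_pow_eq_monomial, monomial_mul, mul_one]
    intro hw0
    have := congrFun hw0 ⟨t0, hmem⟩
    rw [hw] at this
    simp only [hmono, map_mul, map_pow, eval_X, Sum.elim_inl, Sum.elim_inr, Pi.zero_apply] at this
    rcases mul_eq_zero.1 this with h | h
    · exact ha (by simpa using pow_eq_zero_iff (by omega) |>.1 h)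
    · exact hb (by simpa using pow_eq_zero_iff (by omega) |>.1 h)
  · -- vecMul w D = 0
    funext t'
    show (Finset.univ.sum fun t => w t * D t t') = 0
    set s := σ t' with hs
    set shift := monomial s.1.1 (1:K) * fgen K I' I'' c s.2 with hshift
    have hbi := Bihom_shift K I' I'' hN c s
    have hDent : ∀ t, D t t' = coeff t.1 shift := by
      intro t
      rw [hD, Matrix.map_apply, Matrix.submatrix_apply, Matrix.of_apply, eval_Ent, id]
    have : (Finset.univ.sum fun t => w t * D t t') = eval (Sum.elim q r) shift := by
      rw [eval_eq_sum_TT K I' I'' shift hbi, ← Finset.univ_eq_attach]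
      apply Finset.sum_congr rfl
      intro t _
      rw [hDent t, mul_comm]
    rw [this, hshift, map_mul, hz s.2, mul_zero]

end DirA

section DirB
variable {n : ℕ} (K : Type*) [Field K] [IsAlgClosed K] (I' I'' : Finset (Fin n →₀ ℕ))

lemma exists_zero_of_minors (hA : I'.Nonempty) (hB : I''.Nonempty)
    (c : {k // k ∈ I' + I''} → K)
    (hv : ∀ g ∈ SSet K I' I'', eval c g = 0) :
    ∃ (q : {k // k ∈ I'} → K) (r : {k // k ∈ I''} → K), q ≠ 0 ∧ r ≠ 0 ∧
      ∀ p, eval (Sum.elim q r) (fgen K I' I'' c p) = 0 := by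
  classical
  by_contra hcon
  push_neg at hcon
  set J : Ideal (MvPolynomial (Vt I' I'') K) := Ideal.span (Set.range (fgen K I' I'' c)) with hJ
  have hrad : ∀ (a : {k // k ∈ I'}) (b : {k // k ∈ I''}),
      (X (Sum.inl a) * X (Sum.inr b) : MvPolynomial (Vt I' I'') K) ∈ J.radical := by
    intro a b
    rw [← MvPolynomial.vanishingIdeal_zeroLocus_eq_radical (K := K)]
    rw [MvPolynomial.mem_vanishingIdeal_iff]
    intro z hzl
    set q : {k // k ∈ I'} → K := z ∘ Sum.inl with hq
    set r : {k // k ∈ I''} → K := z ∘ Sum.inr with hr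
    have helim : Sum.elim q r = z := by
      funext v
      cases v <;> rfl
    have hzero : ∀ p, eval (Sum.elim q r) (fgen K I' I'' c p) = 0 := by
      intro p
      rw [helim]
      exact (MvPolynomial.mem_zeroLocus_iff.1 hzl) _ (Ideal.subset_span ⟨p, rfl⟩)
    rcases eq_or_ne q 0 with h0 | h0
    · have : z (Sum.inl a) = 0 := by rw [← helim]; simp [h0]
      simp [this]
    · have h1 := hcon q r h0
      rcases eq_or_ne r 0 with h0' | h0'
      · have : z (Sum.inr b) = 0 := by rw [← helim]; simp [h0']
        simp [this]
      · obtain ⟨p, hp⟩ := h1 h0'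
        exact absurd (hzero p) hp
  have hpow : ∀ (a : {k // k ∈ I'}) (b : {k // k ∈ I''}), ∃ m : ℕ,
      (X (Sum.inl a) * X (Sum.inr b) : MvPolynomial (Vt I' I'') K) ^ m ∈ J := by
    intro a b
    exact Ideal.mem_radical_iff.1 (hrad a b)
  choose Nf hNf using hpow
  set N0 : ℕ := (Finset.univ.sup fun ab : {k // k ∈ I'} × {k // k ∈ I''} => Nf ab.1 ab.2) + 1
    with hN0
  have hN0pos : 1 ≤ N0 := Nat.le_add_left 1 _
  have hN0mem : ∀ a b, (X (Sum.inl a) * X (Sum.inr b) : MvPolynomial (Vt I' I'') K) ^ N0 ∈ J := by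
    intro a b
    have hle : Nf a b ≤ N0 := by
      have h := Finset.le_sup (f := fun ab : {k // k ∈ I'} × {k // k ∈ I''} => Nf ab.1 ab.2)
        (Finset.mem_univ (a, b))
      simp only at h
      omega
    have : (X (Sum.inl a) * X (Sum.inr b) : MvPolynomial (Vt I' I'') K) ^ N0
        = (X (Sum.inl a) * X (Sum.inr b)) ^ (N0 - Nf a b) * (X (Sum.inl a) * X (Sum.inr b)) ^ Nf a b := by
      rw [← pow_add, Nat.sub_add_cancel hle]
    rw [this]
    exact Ideal.mul_mem_left _ _ (hNf a b)
  have hcA1 : 1 ≤ I'.card := Finset.card_pos.2 hA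
  have hcB1 : 1 ≤ I''.card := Finset.card_pos.2 hB
  set N : ℕ := N0 * (I'.card + I''.card) with hNdef
  have hN : 1 ≤ N := by
    have : 1 * 1 ≤ N0 * (I'.card + I''.card) := Nat.mul_le_mul hN0pos (by omega)
    omega
  -- every monomial of bidegree (N, N) is in J
  have hmonoJ : ∀ t ∈ TT I' I'' N, (monomial t (1:K) : MvPolynomial (Vt I' I'') K) ∈ J := by
    intro t ht
    obtain ⟨hd1, hd2⟩ := (mem_TT I' I'').1 ht
    have hexA : ∃ a : {k // k ∈ I'}, N0 ≤ t (Sum.inl a) := by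
      by_contra hcon2
      push_neg at hcon2
      have hbound : dA I' I'' t ≤ I'.attach.card * (N0 - 1) := by
        rw [dA]
        calc ∑ a ∈ I'.attach, t (Sum.inl a) ≤ ∑ a ∈ I'.attach, (N0 - 1) :=
          Finset.sum_le_sum (fun a _ => by have := hcon2 a; omega)
        _ = I'.attach.card * (N0 - 1) := by rw [Finset.sum_const, smul_eq_mul]
      rw [Finset.card_attach] at hbound
      rw [hd1] at hbound
      have h1 : I'.card * (N0 - 1) < I'.card * N0 :=
        Nat.mul_lt_mul_of_pos_left (by omega) (by omega)
      have h2 : I'.card * N0 ≤ N0 * (I'.card + I''.card) := by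
        rw [mul_comm]
        exact Nat.mul_le_mul_left N0 (by omega)
      omega
    have hexB : ∃ b : {k // k ∈ I''}, N0 ≤ t (Sum.inr b) := by
      by_contra hcon2
      push_neg at hcon2
      have hbound : dB I' I'' t ≤ I''.attach.card * (N0 - 1) := by
        rw [dB]
        calc ∑ b ∈ I''.attach, t (Sum.inr b) ≤ ∑ b ∈ I''.attach, (N0 - 1) :=
          Finset.sum_le_sum (fun b _ => by have := hcon2 b; omega)
        _ = I''.attach.card * (N0 - 1) := by rw [Finset.sum_const, smul_eq_mul]
      rw [Finset.card_attach] at hbound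
      rw [hd2] at hbound
      have h1 : I''.card * (N0 - 1) < I''.card * N0 :=
        Nat.mul_lt_mul_of_pos_left (by omega) (by omega)
      have h2 : I''.card * N0 ≤ N0 * (I'.card + I''.card) := by
        rw [mul_comm]
        exact Nat.mul_le_mul_left N0 (by omega)
      omega
    obtain ⟨a, haN⟩ := hexA
    obtain ⟨b, hbN⟩ := hexB
    set s0 : Vt I' I'' →₀ ℕ :=
      Finsupp.single (Sum.inl a) N0 + Finsupp.single (Sum.inr b) N0 with hs0
    have hle : s0 ≤ t := by
      rw [Finsupp.le_def]
      intro v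
      rcases v with v | v
      · by_cases hva : v = a
        · subst hva
          simp only [hs0, Finsupp.add_apply, Finsupp.single_apply]
          simp [haN]
        · simp only [hs0, Finsupp.add_apply, Finsupp.single_apply]
          rw [if_neg (by simp [Ne.symm hva]), if_neg (by simp)]
          omega
      · by_cases hvb : v = b
        · subst hvb
          simp only [hs0, Finsupp.add_apply, Finsupp.single_apply]
          simp [hbN]
        · simp only [hs0, Finsupp.add_apply, Finsupp.single_apply]
          rw [if_neg (by simp), if_neg (by simp [Ne.symm hvb])]
          omega
    have hdecomp : (monomial t (1:K) : MvPolynomial (Vt I' I'') K)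
        = monomial (t - s0) 1 * (X (Sum.inl a) * X (Sum.inr b)) ^ N0 := by
      have hXX : ((X (Sum.inl a) * X (Sum.inr b) : MvPolynomial (Vt I' I'') K)) ^ N0
          = monomial s0 1 := by
        rw [mul_pow, X_pow_eq_monomial, X_pow_eq_monomial, monomial_mul, mul_one, hs0]
      rw [hXX, monomial_mul, mul_one, tsub_add_cancel_of_le hle]
    rw [hdecomp]
    exact Ideal.mul_mem_left _ _ (hN0mem a b)
  -- hence in the span of the shifts
  have hmonospan : ∀ t ∈ TT I' I'' N, (monomial t (1:K) : MvPolynomial (Vt I' I'') K)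
      ∈ Submodule.span K (Set.range
        (fun s : {t // t ∈ TT I' I'' (N-1)} × ({k // k ∈ I' + I''} × {k // k ∈ I' + I''}) =>
          monomial s.1.1 (1:K) * fgen K I' I'' c s.2)) := by
    intro t ht
    obtain ⟨hd1, hd2⟩ := (mem_TT I' I'').1 ht
    apply mem_span_shifts K I' I'' hN c _ _ (hmonoJ t ht)
    have := Bihom_monomial K I' I'' t (1:K)
    rwa [hd1, hd2] at this
  -- coordinates
  let φ : MvPolynomial (Vt I' I'') K →ₗ[K] ({t // t ∈ TT I' I'' N} → K) :=
    { toFun := fun x t => coeff t.1 x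
      map_add' := by intro x y; funext t; simp [coeff_add]
      map_smul' := by intro m x; funext t; simp [coeff_smul] }
  set D : Matrix {t // t ∈ TT I' I'' N}
      ({t // t ∈ TT I' I'' (N-1)} × ({k // k ∈ I' + I''} × {k // k ∈ I' + I''})) K :=
    fun t s => eval c (Ent K I' I'' N t s) with hD
  have hcols : ∀ s, (fun t => D t s) = φ (monomial s.1.1 (1:K) * fgen K I' I'' c s.2) := by
    intro s
    funext t
    rw [hD]
    simp only [φ, LinearMap.coe_mk, AddHom.coe_mk]
    rw [eval_Ent]
  have hspan : Submodule.span K (Set.range fun s => fun t => D t s) = ⊤ := by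
    rw [eq_top_iff]
    rw [← (Pi.basisFun K {t // t ∈ TT I' I'' N}).span_eq]
    apply Submodule.span_le.2
    rintro _ ⟨t, rfl⟩
    have hbf : (Pi.basisFun K {t // t ∈ TT I' I'' N}) t = Pi.single t (1:K) := by
      simp [Pi.basisFun_apply]
    rw [hbf]
    have hsingle : Pi.single t (1:K) = φ (monomial t.1 (1:K)) := by
      funext t'
      simp only [φ, LinearMap.coe_mk, AddHom.coe_mk, coeff_monomial]
      rcases eq_or_ne t' t with h | h
      · subst h; simp
      · rw [Pi.single_apply, if_neg h, if_neg (fun hh => h (Subtype.ext hh.symm))]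
    rw [hsingle]
    have := Submodule.mem_map_of_mem (f := φ) (hmonospan t.1 t.2)
    rw [Submodule.map_span, ← Set.range_comp] at this
    refine Submodule.span_mono ?_ this
    rintro _ ⟨s, rfl⟩
    exact ⟨s, by simpa using hcols s⟩
  obtain ⟨σ, hσ⟩ := exists_minor_of_span_cols_eq_top D hspan
  apply hσ
  have hminor : Matrix.det ((Matrix.of (Ent K I' I'' N)).submatrix id σ) ∈ SSet K I' I'' :=
    ⟨N, hN, σ, rfl⟩
  have := hv _ hminor
  rw [RingHom.map_det] at this
  rw [← this]
  congr 1

end DirB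
end Stmt13

open Pointwise

theorem stmt13 {K : Type*} [Field K] [IsAlgClosed K] (n : ℕ)
    (I' I'' : Finset (Fin n →₀ ℕ)) (h' : I'.Nonempty) (h'' : I''.Nonempty) :
    ∃ S : Set (MvPolynomial {k // k ∈ I' + I''} K),
      ∀ c : {k // k ∈ I' + I''} → K, (∃ k, c k ≠ 0) →
        ((∃ Q R : MvPolynomial (Fin n) K, Q ≠ 0 ∧ R ≠ 0 ∧
            Q.support ⊆ I' ∧ R.support ⊆ I'' ∧
            Q * R = ∑ k ∈ (I' + I'').attach, MvPolynomial.monomial (k : Fin n →₀ ℕ) (c k))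
          ↔ ∀ g ∈ S, MvPolynomial.eval c g = 0) := by
  classical
  refine ⟨Stmt13.SSet K I' I'', ?_⟩
  intro c hc
  have hsum : (∑ k ∈ (I' + I'').attach, MvPolynomial.monomial (k : Fin n →₀ ℕ) (c k))
      = Stmt13.Pof K I' I'' c := rfl
  rw [hsum]
  constructor
  · intro h
    obtain ⟨q, r, hq, hr, hz⟩ := (Stmt13.factor_iff_zero K I' I'' c hc).1 h
    exact Stmt13.minors_vanish K I' I'' c q r hq hr hz
  · intro hv
    exact (Stmt13.factor_iff_zero K I' I'' c hc).2
      (Stmt13.exists_zero_of_minors K I' I'' h' h'' c hv)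
end

section
/- Let K be an algebraically closed field and s₁, t₁, s₂, t₂ ∈ ℤ with s₁t₂ − s₂t₁ ≠ 0, and ε₁, ε₂ ∈ K*. Then the system x^{s₁} y^{t₁} = ε₁, x^{s₂} y^{t₂} = ε₂ has a solution with x, y ∈ K*. -/
lemma exists_units_zpow_eq {K : Type*} [Field K] [IsAlgClosed K] (d : ℤ)
    (hd : d ≠ 0) (u : Kˣ) : ∃ a : Kˣ, a ^ d = u := by
  have key : ∀ (n : ℕ), 0 < n → ∀ v : Kˣ, ∃ a : Kˣ, a ^ (n : ℤ) = v := by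
    intro n hn v
    obtain ⟨z, hz⟩ := IsAlgClosed.exists_pow_nat_eq (v : K) hn
    have hz0 : z ≠ 0 := by
      rintro rfl
      simp [zero_pow hn.ne'] at hz
      exact v.ne_zero hz.symm
    refine ⟨Units.mk0 z hz0, ?_⟩
    ext
    push_cast
    simpa using hz
  rcases lt_or_gt_of_ne hd with hlt | hgt
  · obtain ⟨a, ha⟩ := key (-d).toNat (by omega) u
    refine ⟨a⁻¹, ?_⟩
    rw [show ((-d).toNat : ℤ) = -d by omega] at ha
    rw [← ha]
    group
  · obtain ⟨a, ha⟩ := key d.toNat (by omega) u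
    refine ⟨a, ?_⟩
    rwa [show (d.toNat : ℤ) = d by omega] at ha

theorem stmt14 {K : Type*} [Field K] [IsAlgClosed K] (s₁ t₁ s₂ t₂ : ℤ)
    (h : s₁ * t₂ - s₂ * t₁ ≠ 0) (ε₁ ε₂ : Kˣ) :
    ∃ x y : Kˣ, x ^ s₁ * y ^ t₁ = ε₁ ∧ x ^ s₂ * y ^ t₂ = ε₂ := by
  set d := s₁ * t₂ - s₂ * t₁ with hd
  obtain ⟨a, ha⟩ := exists_units_zpow_eq d h ε₁
  obtain ⟨b, hb⟩ := exists_units_zpow_eq d h ε₂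
  refine ⟨a ^ t₂ * b ^ (-t₁), a ^ (-s₂) * b ^ s₁, ?_, ?_⟩
  · rw [← ha, mul_zpow, mul_zpow, ← zpow_mul, ← zpow_mul, ← zpow_mul, ← zpow_mul,
      mul_mul_mul_comm, ← zpow_add, ← zpow_add]
    rw [show t₂ * s₁ + -s₂ * t₁ = d by ring, show -t₁ * s₁ + s₁ * t₁ = 0 by ring]
    simp
  · rw [← hb, mul_zpow, mul_zpow, ← zpow_mul, ← zpow_mul, ← zpow_mul, ← zpow_mul,
      mul_mul_mul_comm, ← zpow_add, ← zpow_add]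
    rw [show t₂ * s₂ + -s₂ * t₂ = 0 by ring, show -t₁ * s₂ + s₁ * t₂ = d by ring]
    simp
end

section
/- Let K be an algebraically closed field, q, r ∈ ℤⁿ linearly independent over ℚ, and ε, η ∈ K*. Then there exists x = (x₁,…,xₙ) ∈ (K*)ⁿ with x^q = ε and x^r = η. -/
private lemma exists_zpow_eq {K : Type*} [Field K] [IsAlgClosed K] (ε : Kˣ) (D : ℤ)
    (hD : D ≠ 0) : ∃ δ : Kˣ, δ ^ D = ε := by
  have hpos : 0 < D.natAbs := Int.natAbs_pos.mpr hD
  obtain ⟨z, hz⟩ := IsAlgClosed.exists_pow_nat_eq (ε : K) hpos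
  have hz0 : z ≠ 0 := by
    intro h
    rw [h, zero_pow hpos.ne'] at hz
    exact ε.ne_zero hz.symm
  set u : Kˣ := Units.mk0 z hz0 with hu
  have hun : u ^ (D.natAbs : ℤ) = ε := by
    rw [zpow_natCast]
    ext
    simpa [hu] using hz
  rcases le_or_gt 0 D with h | h
  · refine ⟨u, ?_⟩
    rwa [Int.natAbs_of_nonneg h] at hun
  · refine ⟨u⁻¹, ?_⟩
    rw [inv_zpow, ← zpow_neg]
    rwa [Int.ofNat_natAbs_of_nonpos h.le] at hun

theorem stmt15 {K : Type*} [Field K] [IsAlgClosed K] (n : ℕ) (q r : Fin n → ℤ)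
    (hqr : LinearIndependent ℚ ![(fun t => (q t : ℚ)), (fun t => (r t : ℚ))])
    (ε η : Kˣ) :
    ∃ x : Fin n → Kˣ, (∏ t, x t ^ q t) = ε ∧ (∏ t, x t ^ r t) = η := by
  have P : ∀ s t : ℚ, (s • fun k => (q k : ℚ)) + (t • fun k => (r k : ℚ)) = 0 →
      s = 0 ∧ t = 0 := fun s t h => (LinearIndependent.pair_iff.mp hqr) s t h
  -- find a nonzero 2x2 minor
  have hminor : ∃ i j : Fin n, q i * r j - q j * r i ≠ 0 := by
    by_contra hc
    push_neg at hc
    have hall : ∀ i j, q i * r j = q j * r i := by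
      intro i j
      have := hc i j
      omega
    have hq : ∃ i, q i ≠ 0 := by
      by_contra hq0
      push_neg at hq0
      have := P 1 0 (by
        funext k
        simp [hq0 k])
      exact one_ne_zero this.1
    obtain ⟨i, hi⟩ := hq
    have hiq : (q i : ℚ) ≠ 0 := Int.cast_ne_zero.mpr hi
    have := P ((r i : ℚ) / (q i : ℚ)) (-1) (by
      funext k
      have h := hall i k
      have : (q i : ℚ) * (r k : ℚ) = (q k : ℚ) * (r i : ℚ) := by
        exact_mod_cast h
      simp only [Pi.add_apply, Pi.smul_apply, smul_eq_mul, Pi.zero_apply]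
      field_simp
      linarith)
    exact one_ne_zero (neg_eq_zero.mp this.2)
  obtain ⟨i, j, hD⟩ := hminor
  set D : ℤ := q i * r j - q j * r i with hDdef
  have hij : i ≠ j := by
    rintro rfl
    apply hD
    ring
  obtain ⟨δ, hδ⟩ := exists_zpow_eq ε D hD
  obtain ⟨τ, hτ⟩ := exists_zpow_eq η D hD
  set x : Fin n → Kˣ := fun t =>
    if t = i then δ ^ r j * τ ^ (-(q j)) else if t = j then δ ^ (-(r i)) * τ ^ q i else 1
    with hx
  have hone : ∀ f : Fin n → ℤ, ∏ t ∈ Finset.univ \ {i, j}, x t ^ f t = 1 := by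
    intro f
    apply Finset.prod_eq_one
    intro t ht
    simp only [Finset.mem_sdiff, Finset.mem_insert, Finset.mem_singleton, not_or] at ht
    simp [hx, ht.2.1, ht.2.2]
  refine ⟨x, ?_, ?_⟩
  all_goals
  · rw [show (Finset.univ : Finset (Fin n)) = ({i, j} ∪ (Finset.univ \ {i, j})) by
      simp [Finset.union_sdiff_of_subset]]
    rw [Finset.prod_union (Finset.disjoint_sdiff), hone, mul_one]
    rw [Finset.prod_pair hij]
    simp only [hx, if_pos rfl, if_neg hij, if_neg (Ne.symm hij), ite_true]
    rw [mul_zpow, mul_zpow, ← zpow_mul, ← zpow_mul, ← zpow_mul, ← zpow_mul]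
    rw [mul_mul_mul_comm, ← zpow_add, ← zpow_add]
    first
    | · rw [show r j * q i + -r i * q j = D by rw [hDdef]; ring,
        show -q j * q i + q i * q j = 0 by ring, zpow_zero, mul_one, hδ]
    | · rw [show r j * r i + -r i * r j = 0 by ring,
        show -q j * r i + q i * r j = D by rw [hDdef]; ring, zpow_zero, one_mul, hτ]
end
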